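/- arXiv:2402.02638 — 4 statements merged into one kernel-verified Lean document; each statement's English description precedes it below -/
import Mathlib

section
/- Let 0 < β ≤ 1, ν > 0, μ ∈ ℂ, k ∈ ℕ, and let J^β denote the Riemann-Liouville fractional integral (J^β f)(t) = (1/Γ(β)) ∫_0^t (t-τ)^{β-1} f(τ) dτ, with I the identity. Then (I - μ J^β)^k applied to t ↦ (t^{kβ+ν-1}/k!) E_{β,ν}^{(k)}(μ t^β) equals J^{kβ} applied to t ↦ t^{ν-1} E_{β,ν}(μ t^β). -/
open MeasureTheory Filter Set

/-- Two-parameter Mittag-Leffler function `E_{β,ν}(z) = Σ zⁿ/Γ(βn+ν)`. -/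
noncomputable def ML (β ν : ℝ) (z : ℂ) : ℂ :=
  ∑' n : ℕ, z ^ n / Complex.Gamma ((β * n + ν : ℝ) : ℂ)

/-- Riemann-Liouville fractional integral of order `γ`. -/
noncomputable def frInt (γ : ℝ) (f : ℝ → ℂ) (t : ℝ) : ℂ :=
  (Real.Gamma γ : ℂ)⁻¹ * ∫ τ in (0:ℝ)..t, (((t - τ) ^ (γ - 1) : ℝ) : ℂ) * f τ

/-- Fractional integral with the convention `J⁰ = I`. -/
noncomputable def frInt' (γ : ℝ) (f : ℝ → ℂ) : ℝ → ℂ :=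
  if γ = 0 then f else frInt γ f

/-- Laplace transform. -/
noncomputable def laplace (f : ℝ → ℂ) (s : ℝ) : ℂ :=
  ∫ t in Set.Ioi (0:ℝ), Complex.exp (-(s * t)) * f t


private lemma gamma_mono {x y : ℝ} (hx : 2 ≤ x) (hxy : x ≤ y) : Real.Gamma x ≤ Real.Gamma y :=
  Real.Gamma_strictMonoOn_Ici.monotoneOn hx (hx.trans hxy) hxy

private lemma summable_master {β c : ℝ} (hβ : 0 < β) (hc : 0 < c) {r : ℝ} (hr : 0 ≤ r) :
    Summable (fun n : ℕ => r ^ n / Real.Gamma (β * n + c)) := by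
  set R : ℝ := 2 * r + 1 with hR
  have hR0 : 0 < R := by positivity
  have hR1 : 1 ≤ R := by simp only [hR]; linarith
  set q : ℝ := R ^ (2 / β) with hq
  have hq1 : 1 ≤ q := Real.one_le_rpow hR1 (by positivity)
  obtain ⟨M₀, hM₀⟩ : ∃ M₀ : ℕ, ∀ m ≥ M₀, q ^ m ≤ (m.factorial : ℝ) := by
    have h2 := ((Real.summable_pow_div_factorial q).tendsto_atTop_zero).eventually
      (gt_mem_nhds one_pos)
    rw [eventually_atTop] at h2
    obtain ⟨M₀, hM⟩ := h2
    refine ⟨M₀, fun m hm => ?_⟩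
    have h3 := hM m hm
    have hfac : (0:ℝ) < (m.factorial : ℝ) := by positivity
    rw [div_lt_one hfac] at h3
    exact h3.le
  have hev : ∀ᶠ n : ℕ in atTop, r ^ n / Real.Gamma (β * ↑n + c) ≤ (1/2) ^ n := by
    have htend : Tendsto (fun n : ℕ => β * (n : ℝ)) atTop atTop :=
      Tendsto.const_mul_atTop hβ tendsto_natCast_atTop_atTop
    filter_upwards [htend.eventually_ge_atTop 4,
      htend.eventually_ge_atTop ((M₀ : ℝ) + 4 - c)] with n h4 hM
    set x : ℝ := β * n + c with hx
    have hx4 : 4 ≤ x := by simp only [hx]; linarith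
    have hfl2 : 2 ≤ ⌊x⌋₊ := Nat.le_floor (by push_cast; linarith)
    set m : ℕ := ⌊x⌋₊ - 1 with hm
    have hm1 : (m : ℝ) = (⌊x⌋₊ : ℝ) - 1 := by
      rw [hm, Nat.cast_sub (by omega)]; simp
    have hmx : x - 2 ≤ (m:ℝ) := by
      have h5 := Nat.lt_floor_add_one x
      rw [hm1]; linarith
    have hmle : (m:ℝ) + 1 ≤ x := by
      rw [hm1]; have := Nat.floor_le (show (0:ℝ) ≤ x by linarith); linarith
    have hΓ : R ^ n ≤ Real.Gamma x := by
      have e1 : (R : ℝ) ^ n = q ^ (β * n / 2) := by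
        rw [hq, ← Real.rpow_natCast R n, ← Real.rpow_mul hR0.le]
        congr 1
        field_simp
      have e2 : q ^ (β * n / 2) ≤ q ^ ((m:ℝ)) := by
        apply Real.rpow_le_rpow_of_exponent_le hq1
        have : β * n + c - 2 ≤ (m:ℝ) := hmx
        have h6 : 4 ≤ β * (n:ℝ) := h4
        linarith
      have e3 : q ^ ((m:ℝ)) = q ^ m := Real.rpow_natCast q m
      have e4 : q ^ m ≤ (m.factorial : ℝ) := by
        apply hM₀
        have : (M₀ : ℝ) ≤ (m : ℝ) := by
          have : (M₀:ℝ) + 4 - c ≤ β * n := hM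
          simp only [hx] at hmx; linarith
        exact_mod_cast this
      have e5 : (m.factorial : ℝ) = Real.Gamma ((m:ℝ) + 1) := (Real.Gamma_nat_eq_factorial m).symm
      have e6 : Real.Gamma ((m:ℝ)+1) ≤ Real.Gamma x := gamma_mono (by linarith) hmle
      calc R ^ n = q ^ (β * n / 2) := e1
        _ ≤ q ^ ((m:ℝ)) := e2
        _ = q ^ m := e3
        _ ≤ (m.factorial : ℝ) := e4
        _ = Real.Gamma ((m:ℝ)+1) := e5
        _ ≤ Real.Gamma x := e6
    have hRn : (0:ℝ) < R ^ n := by positivity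
    calc r ^ n / Real.Gamma x ≤ r ^ n / R ^ n := by gcongr
      _ = (r / R) ^ n := (div_pow r R n).symm
      _ ≤ (1/2) ^ n := by
          apply pow_le_pow_left₀ (by positivity)
          rw [div_le_div_iff₀ hR0 (by norm_num)]
          simp only [hR]; linarith
  apply summable_of_isBigO_nat (summable_geometric_of_lt_one (by norm_num) (by norm_num : (1:ℝ)/2 < 1))
  apply Asymptotics.IsBigO.of_bound 1
  filter_upwards [hev] with n h
  have hΓ0 : 0 < Real.Gamma (β * n + c) := Real.Gamma_pos_of_pos (by positivity)
  rw [one_mul, Real.norm_of_nonneg (by positivity), Real.norm_of_nonneg (by positivity)]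
  exact h


private lemma realf_eq_norm {b c : ℝ} :
    ∀ x ∈ Ioc (0:ℝ) 1, x ^ (c-1) * (1-x) ^ (b-1)
      = ‖(x:ℂ) ^ ((c:ℂ)-1) * (1-(x:ℂ)) ^ ((b:ℂ)-1)‖ := by
  intro x hx
  have hx0 : (0:ℝ) < x := hx.1
  have hx1 : (0:ℝ) ≤ 1 - x := by linarith [hx.2]
  rw [norm_mul]
  congr 1
  · rw [Complex.norm_cpow_eq_rpow_re_of_pos hx0]
    norm_num
  · rw [show (1 - (x:ℂ)) = ((1 - x : ℝ) : ℂ) by push_cast; ring,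
      show ((b:ℂ) - 1) = (((b-1:ℝ)):ℂ) by push_cast; ring,
      ← Complex.ofReal_cpow hx1]
    rw [Complex.norm_real, Real.norm_of_nonneg (Real.rpow_nonneg hx1 _)]

private lemma realf_intervalIntegrable {b c : ℝ} (hb : 0 < b) (hc : 0 < c) :
    IntervalIntegrable (fun x : ℝ => x ^ (c-1) * (1-x) ^ (b-1)) volume 0 1 := by
  have h1 := (Complex.betaIntegral_convergent (u := (c:ℂ)) (v := (b:ℂ))
    (by simpa using hc) (by simpa using hb)).norm
  apply h1.congr
  have : Set.uIoc (0:ℝ) 1 = Ioc (0:ℝ) 1 := Set.uIoc_of_le (by norm_num)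
  rw [this]
  intro x hx
  exact (realf_eq_norm x hx).symm

private lemma beta_integrable {b c t : ℝ} (hb : 0 < b) (hc : 0 < c) (ht : 0 < t) :
    IntervalIntegrable (fun τ : ℝ => (t - τ) ^ (b - 1) * τ ^ (c - 1)) volume 0 t := by
  have h1 := ((realf_intervalIntegrable hb hc).comp_mul_left (c := 1/t)).const_mul
    (t ^ (c-1) * t ^ (b-1))
  have ht' : t ≠ 0 := ht.ne'
  simp only [one_div, inv_inv, zero_div] at h1
  apply h1.congr
  have h2 : Set.uIoc (0:ℝ) t = Ioc (0:ℝ) t := Set.uIoc_of_le ht.le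
  rw [h2]
  intro τ hτ
  have hτ0 : (0:ℝ) < τ := hτ.1
  have hτt : τ ≤ t := hτ.2
  have e1 : t⁻¹ * τ = τ / t := by ring
  have e2 : (1 : ℝ) - τ / t = (t - τ) / t := by field_simp
  simp only [e1, e2]
  rw [Real.div_rpow hτ0.le ht.le, Real.div_rpow (by linarith) ht.le]
  have h3 : t ^ (c-1) ≠ 0 := (Real.rpow_pos_of_pos ht _).ne'
  have h4 : t ^ (b-1) ≠ 0 := (Real.rpow_pos_of_pos ht _).ne'
  field_simp

private lemma beta_value {b c t : ℝ} (hb : 0 < b) (hc : 0 < c) (ht : 0 < t) :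
    ∫ τ in (0:ℝ)..t, (t - τ) ^ (b - 1) * τ ^ (c - 1)
      = Real.Gamma b * Real.Gamma c / Real.Gamma (b + c) * t ^ (b + c - 1) := by
  have hΓ : (Real.Gamma ((c:ℝ) + b)) ≠ 0 := (Real.Gamma_pos_of_pos (by linarith)).ne'
  have key : ∫ τ in (0:ℝ)..t, (τ:ℂ) ^ ((c:ℂ)-1) * ((t:ℂ) - τ) ^ ((b:ℂ)-1)
      = (t:ℂ) ^ ((c:ℂ) + (b:ℂ) - 1) * Complex.betaIntegral c b :=
    Complex.betaIntegral_scaled (c:ℂ) (b:ℂ) ht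
  have hbeta : Complex.betaIntegral c b
      = Complex.Gamma c * Complex.Gamma b / Complex.Gamma ((c:ℂ) + (b:ℂ)) := by
    have h := Complex.Gamma_mul_Gamma_eq_betaIntegral
      (s := (c:ℂ)) (t := (b:ℂ)) (by simpa using hc) (by simpa using hb)
    have hne : Complex.Gamma ((c:ℂ) + (b:ℂ)) ≠ 0 := by
      rw [show ((c:ℂ) + (b:ℂ)) = (((c+b : ℝ)):ℂ) by push_cast; ring, Complex.Gamma_ofReal]
      simpa using (Real.Gamma_pos_of_pos (by linarith : (0:ℝ) < c + b)).ne'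
    field_simp at h ⊢
    rw [h]
  have cast_int : ∫ τ in (0:ℝ)..t, (((t - τ) ^ (b - 1) * τ ^ (c - 1) : ℝ) : ℂ)
      = ∫ τ in (0:ℝ)..t, (τ:ℂ) ^ ((c:ℂ)-1) * ((t:ℂ) - τ) ^ ((b:ℂ)-1) := by
    rw [intervalIntegral.integral_of_le ht.le, intervalIntegral.integral_of_le ht.le]
    apply setIntegral_congr_fun measurableSet_Ioc
    intro τ hτ
    have hτ0 : (0:ℝ) ≤ τ := hτ.1.le
    have hτt : (0:ℝ) ≤ t - τ := by linarith [hτ.2]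
    simp only
    rw [Complex.ofReal_mul, Complex.ofReal_cpow hτt, Complex.ofReal_cpow hτ0]
    push_cast
    ring
  have : (((∫ τ in (0:ℝ)..t, (t - τ) ^ (b - 1) * τ ^ (c - 1)) : ℝ) : ℂ)
      = (((Real.Gamma b * Real.Gamma c / Real.Gamma (b + c) * t ^ (b + c - 1)) : ℝ) : ℂ) := by
    rw [← intervalIntegral.integral_ofReal, cast_int, key, hbeta]
    rw [show ((c:ℂ) + (b:ℂ) - 1) = (((c + b - 1 : ℝ)):ℂ) by push_cast; ring,
      ← Complex.ofReal_cpow ht.le,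
      show ((c:ℂ) + (b:ℂ)) = (((c+b : ℝ)):ℂ) by push_cast; ring,
      Complex.Gamma_ofReal, Complex.Gamma_ofReal, Complex.Gamma_ofReal]
    push_cast
    rw [show (c + b : ℝ) = b + c by ring]
    ring
  exact_mod_cast this



private noncomputable def pT (β ν t : ℝ) (n : ℕ) : ℂ :=
  ((t ^ (β * n + ν - 1) : ℝ) : ℂ) / ((Real.Gamma (β * n + ν) : ℝ) : ℂ)

private noncomputable def G (β ν : ℝ) (a : ℕ → ℂ) (t : ℝ) : ℂ := ∑' n, a n * pT β ν t n

private def Adm (a : ℕ → ℂ) : Prop := ∃ C r : ℝ, 0 ≤ C ∧ 1 ≤ r ∧ ∀ n, ‖a n‖ ≤ C * r ^ n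

private lemma pT_pos {β ν : ℝ} (hν : 0 < ν) {t : ℝ} (ht : 0 < t) (n : ℕ)
    (hb : 0 ≤ β) :
    ‖pT β ν t n‖ = t ^ (β * n + ν - 1) / Real.Gamma (β * n + ν) := by
  have hΓ : 0 < Real.Gamma (β * n + ν) := Real.Gamma_pos_of_pos (by positivity)
  rw [pT, norm_div, Complex.norm_real, Complex.norm_real,
    Real.norm_of_nonneg (Real.rpow_nonneg ht.le _), Real.norm_of_nonneg hΓ.le]

private lemma pow_split {β ν t : ℝ} (ht : 0 < t) (n : ℕ) :
    t ^ (β * n + ν - 1) = (t ^ β) ^ n * t ^ (ν - 1) := by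
  rw [← Real.rpow_natCast (t ^ β) n, ← Real.rpow_mul ht.le, ← Real.rpow_add ht]
  ring_nf

private lemma summable_G {β ν : ℝ} (hβ : 0 < β) (hν : 0 < ν) {a : ℕ → ℂ} (ha : Adm a)
    {t : ℝ} (ht : 0 < t) : Summable (fun n => a n * pT β ν t n) := by
  obtain ⟨C, r, hC, hr, hb⟩ := ha
  apply Summable.of_norm
  have hsum : Summable (fun n : ℕ =>
      (C * t ^ (ν - 1)) * ((r * t ^ β) ^ n / Real.Gamma (β * n + ν))) :=
    (summable_master hβ hν (by positivity)).mul_left _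
  apply Summable.of_nonneg_of_le (fun n => norm_nonneg _) _ hsum
  intro n
  have hΓ : 0 < Real.Gamma (β * n + ν) := Real.Gamma_pos_of_pos (by positivity)
  rw [norm_mul, pT_pos hν ht n hβ.le]
  rw [pow_split ht, mul_pow]
  have h1 : ‖a n‖ ≤ C * r ^ n := hb n
  have h2 : (0:ℝ) ≤ (t ^ β) ^ n * t ^ (ν-1) / Real.Gamma (β * n + ν) := by positivity
  calc ‖a n‖ * ((t ^ β) ^ n * t ^ (ν - 1) / Real.Gamma (β * n + ν))
      ≤ (C * r ^ n) * ((t ^ β) ^ n * t ^ (ν - 1) / Real.Gamma (β * n + ν)) := by gcongr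
    _ = C * t ^ (ν - 1) * (r ^ n * (t ^ β) ^ n / Real.Gamma (β * n + ν)) := by ring

private lemma frInt_G {β ν : ℝ} (hβ : 0 < β) (hν : 0 < ν) {γ : ℝ} (hγ : 0 < γ)
    {a : ℕ → ℂ} (ha : Adm a) {t : ℝ} (ht : 0 < t) :
    frInt γ (G β ν a) t
      = ∑' n : ℕ, a n * ((t ^ (β * n + ν + γ - 1) : ℝ) : ℂ)
          / ((Real.Gamma (β * n + ν + γ) : ℝ) : ℂ) := by
  obtain ⟨C, r, hC, hr, hbnd⟩ := ha
  have hc : ∀ n : ℕ, (0:ℝ) < β * n + ν := fun n => by positivity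
  have hΓn : ∀ n : ℕ, (0:ℝ) < Real.Gamma (β * n + ν) := fun n => Real.Gamma_pos_of_pos (hc n)
  have hΓγ : (0:ℝ) < Real.Gamma γ := Real.Gamma_pos_of_pos hγ
  set F : ℕ → ℝ → ℂ := fun n τ =>
    (a n / ((Real.Gamma (β * n + ν) : ℝ) : ℂ)) *
      (((t - τ) ^ (γ - 1) * τ ^ (β * n + ν - 1) : ℝ) : ℂ) with hF
  -- per-term integrability
  have hInt : ∀ n : ℕ, IntegrableOn (F n) (Ioc 0 t) volume := by
    intro n
    have h1 := (intervalIntegrable_iff_integrableOn_Ioc_of_le ht.le).mp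
      (beta_integrable hγ (hc n) ht)
    exact (h1.ofReal.const_mul _)
  -- norm integrals
  have hval : ∀ n : ℕ, ∫ τ in Ioc (0:ℝ) t, ((((t - τ) ^ (γ - 1) * τ ^ (β * n + ν - 1) : ℝ)) : ℂ)
      = ((Real.Gamma γ * Real.Gamma (β * n + ν) / Real.Gamma (γ + (β * n + ν))
          * t ^ (γ + (β * n + ν) - 1) : ℝ) : ℂ) := by
    intro n
    have h0 : (((∫ τ in (0:ℝ)..t, (t - τ) ^ (γ - 1) * τ ^ (β * n + ν - 1)) : ℝ) : ℂ)
        = ((Real.Gamma γ * Real.Gamma (β * n + ν) / Real.Gamma (γ + (β * n + ν))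
            * t ^ (γ + (β * n + ν) - 1) : ℝ) : ℂ) := by
      rw [beta_value hγ (hc n) ht]
    rw [← intervalIntegral.integral_ofReal] at h0
    rw [← intervalIntegral.integral_of_le ht.le]
    exact h0
  have hnormval : ∀ n : ℕ, ∫ τ in Ioc (0:ℝ) t, ‖F n τ‖
      = (‖a n‖ / Real.Gamma (β * n + ν)) *
        (Real.Gamma γ * Real.Gamma (β * n + ν) / Real.Gamma (γ + (β * n + ν))
          * t ^ (γ + (β * n + ν) - 1)) := by
    intro n
    have : ∀ τ ∈ Ioc (0:ℝ) t, ‖F n τ‖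
        = (‖a n‖ / Real.Gamma (β * n + ν)) * ((t - τ) ^ (γ - 1) * τ ^ (β * n + ν - 1)) := by
      intro τ hτ
      have h2 : (0:ℝ) ≤ (t - τ) ^ (γ - 1) * τ ^ (β * n + ν - 1) := by
        have := hτ.1; have := hτ.2
        have h3 : (0:ℝ) ≤ t - τ := by linarith
        positivity
      rw [hF]
      simp only
      rw [norm_mul, norm_div, Complex.norm_real, Complex.norm_real,
        Real.norm_of_nonneg (hΓn n).le, Real.norm_of_nonneg h2]
    rw [setIntegral_congr_fun measurableSet_Ioc this, integral_const_mul,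
      ← intervalIntegral.integral_of_le ht.le, beta_value hγ (hc n) ht]
  -- summability of norm integrals
  have hsumnorm : Summable (fun n : ℕ => ∫ τ in Ioc (0:ℝ) t, ‖F n τ‖) := by
    have hbig : Summable (fun n : ℕ =>
        (C * Real.Gamma γ * t ^ (ν + γ - 1)) *
          ((r * t ^ β) ^ n / Real.Gamma (β * n + (ν + γ)))) :=
      (summable_master hβ (by positivity) (by positivity)).mul_left _
    apply Summable.of_nonneg_of_le _ _ hbig
    · intro n; rw [hnormval n]; positivity
    · intro n
      rw [hnormval n]
      have hΓg : (0:ℝ) < Real.Gamma (γ + (β * n + ν)) := Real.Gamma_pos_of_pos (by positivity)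
      have e0 : γ + (β * n + ν) = β * n + (ν + γ) := by ring
      rw [e0]
      rw [pow_split (β := β) (ν := ν + γ) ht n]
      have : ‖a n‖ / Real.Gamma (β * n + ν) *
            (Real.Gamma γ * Real.Gamma (β * n + ν) / Real.Gamma (β * n + (ν + γ)) *
              ((t ^ β) ^ n * t ^ (ν + γ - 1)))
          = ‖a n‖ * (Real.Gamma γ * t ^ (ν + γ - 1)) *
              ((t ^ β) ^ n / Real.Gamma (β * n + (ν + γ))) := by
        field_simp
      rw [this]
      calc ‖a n‖ * (Real.Gamma γ * t ^ (ν + γ - 1)) * ((t ^ β) ^ n / Real.Gamma (β * n + (ν + γ)))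
          ≤ (C * r ^ n) * (Real.Gamma γ * t ^ (ν + γ - 1)) *
              ((t ^ β) ^ n / Real.Gamma (β * n + (ν + γ))) := by
            have hΓ2 : (0:ℝ) < Real.Gamma (β * n + (ν + γ)) :=
              Real.Gamma_pos_of_pos (by positivity)
            gcongr
            exact hbnd n
        _ = C * Real.Gamma γ * t ^ (ν + γ - 1) *
              ((r * t ^ β) ^ n / Real.Gamma (β * n + (ν + γ))) := by
            rw [mul_pow]; ring
  -- the integrand is the tsum of F
  have hint_eq : ∫ τ in (0:ℝ)..t, (((t - τ) ^ (γ - 1) : ℝ) : ℂ) * G β ν a τ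
      = ∫ τ in Ioc (0:ℝ) t, (∑' n, F n τ) := by
    rw [intervalIntegral.integral_of_le ht.le]
    apply setIntegral_congr_fun measurableSet_Ioc
    intro τ hτ
    simp only [G]
    rw [← tsum_mul_left]
    apply tsum_congr
    intro n
    rw [hF]
    simp only [pT]
    rw [Complex.ofReal_mul]
    ring
  -- interchange
  have hswap : ∫ τ in Ioc (0:ℝ) t, (∑' n, F n τ) = ∑' n, ∫ τ in Ioc (0:ℝ) t, F n τ :=
    (integral_tsum_of_summable_integral_norm hInt hsumnorm).symm
  have hterm : ∀ n : ℕ, ∫ τ in Ioc (0:ℝ) t, F n τ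
      = (a n / ((Real.Gamma (β * n + ν) : ℝ) : ℂ)) *
        ((Real.Gamma γ * Real.Gamma (β * n + ν) / Real.Gamma (γ + (β * n + ν))
          * t ^ (γ + (β * n + ν) - 1) : ℝ) : ℂ) := by
    intro n
    rw [hF]
    simp only
    rw [integral_const_mul, hval n]
  rw [frInt, hint_eq, hswap]
  rw [← tsum_mul_left]
  apply tsum_congr
  intro n
  rw [hterm n]
  have e0 : γ + (β * n + ν) = β * n + ν + γ := by ring
  rw [e0]
  have hΓ3 : ((Real.Gamma (β * n + ν) : ℝ) : ℂ) ≠ 0 := by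
    simpa using (hΓn n).ne'
  have hΓ4 : ((Real.Gamma γ : ℝ) : ℂ) ≠ 0 := by simpa using hΓγ.ne'
  have hΓ5 : ((Real.Gamma (β * n + ν + γ) : ℝ) : ℂ) ≠ 0 := by
    simpa using (Real.Gamma_pos_of_pos (show (0:ℝ) < β * n + ν + γ by positivity)).ne'
  push_cast
  field_simp


private def shiftSeq (a : ℕ → ℂ) : ℕ → ℂ
  | 0 => 0
  | n+1 => a n

private def Tseq (μ : ℂ) (a : ℕ → ℂ) : ℕ → ℂ := fun n => a n - μ * shiftSeq a n

private def aseq (μ : ℂ) (k : ℕ) : ℕ → ℂ :=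
  fun n => if k ≤ n then (n.choose k : ℂ) * μ ^ (n - k) else 0

private lemma adm_shift {a : ℕ → ℂ} (ha : Adm a) : Adm (shiftSeq a) := by
  obtain ⟨C, r, hC, hr, hb⟩ := ha
  refine ⟨C, r, hC, hr, fun n => ?_⟩
  cases n with
  | zero => simp [shiftSeq]; positivity
  | succ n =>
    have h1 : r ^ n ≤ r ^ (n+1) := pow_le_pow_right₀ hr (Nat.le_succ n)
    calc ‖shiftSeq a (n+1)‖ = ‖a n‖ := rfl
      _ ≤ C * r ^ n := hb n
      _ ≤ C * r ^ (n+1) := by gcongr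
  
private lemma adm_Tseq {μ : ℂ} {a : ℕ → ℂ} (ha : Adm a) : Adm (Tseq μ a) := by
  obtain ⟨C, r, hC, hr, hb⟩ := ha
  refine ⟨C * (1 + ‖μ‖), r, by positivity, hr, fun n => ?_⟩
  cases n with
  | zero =>
    have : Tseq μ a 0 = a 0 := by simp [Tseq, shiftSeq]
    rw [this]
    have h0 := hb 0
    have : (0:ℝ) ≤ ‖μ‖ := norm_nonneg μ
    simp only [pow_zero] at h0 ⊢
    nlinarith
  | succ n =>
    have h1 : ‖Tseq μ a (n+1)‖ ≤ ‖a (n+1)‖ + ‖μ‖ * ‖a n‖ := by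
      rw [Tseq]
      refine (norm_sub_le _ _).trans ?_
      simp [shiftSeq, norm_mul]
    have h4 : r ^ n ≤ r ^ (n+1) := pow_le_pow_right₀ hr (Nat.le_succ n)
    calc ‖Tseq μ a (n+1)‖ ≤ ‖a (n+1)‖ + ‖μ‖ * ‖a n‖ := h1
      _ ≤ C * r ^ (n+1) + ‖μ‖ * (C * r ^ n) :=
          add_le_add (hb (n+1)) (mul_le_mul_of_nonneg_left (hb n) (norm_nonneg μ))
      _ ≤ C * r ^ (n+1) + ‖μ‖ * (C * r ^ (n+1)) := by gcongr
      _ = C * (1 + ‖μ‖) * r ^ (n+1) := by ring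

private lemma adm_aseq (μ : ℂ) (k : ℕ) : Adm (aseq μ k) := by
  refine ⟨1, 2 * (1 + ‖μ‖), one_pos.le, by nlinarith [norm_nonneg μ], fun n => ?_⟩
  rw [aseq]
  split_ifs with h
  · rw [norm_mul, norm_pow, Complex.norm_natCast]
    have hch : (n.choose k : ℝ) ≤ 2 ^ n := by
      have h1 : n.choose k ≤ ∑ m ∈ Finset.range (n+1), n.choose m :=
        Finset.single_le_sum (fun i _ => Nat.zero_le _) (Finset.mem_range.mpr (by omega))
      have h2 : (n.choose k : ℝ) ≤ ((2:ℕ) ^ n : ℝ) := by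
        exact_mod_cast h1.trans_eq (Nat.sum_range_choose n)
      simpa using h2
    have hmu : ‖μ‖ ^ (n - k) ≤ (1 + ‖μ‖) ^ n := by
      calc ‖μ‖ ^ (n - k) ≤ (1 + ‖μ‖) ^ (n - k) :=
            pow_le_pow_left₀ (norm_nonneg μ) (by linarith [norm_nonneg μ]) _
        _ ≤ (1 + ‖μ‖) ^ n := pow_le_pow_right₀ (by linarith [norm_nonneg μ]) (Nat.sub_le n k)
    calc (n.choose k : ℝ) * ‖μ‖ ^ (n - k) ≤ 2 ^ n * (1 + ‖μ‖) ^ n := by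
          apply mul_le_mul hch hmu (by positivity) (by positivity)
      _ = (2 * (1 + ‖μ‖)) ^ n := (mul_pow _ _ _).symm
      _ = 1 * (2 * (1 + ‖μ‖)) ^ n := (one_mul _).symm
  · simp; positivity

private lemma Tseq_shift (μ : ℂ) (a : ℕ → ℂ) :
    Tseq μ (shiftSeq a) = shiftSeq (Tseq μ a) := by
  funext n
  cases n with
  | zero => simp [Tseq, shiftSeq]
  | succ n => cases n with
    | zero => simp [Tseq, shiftSeq]
    | succ m => simp [Tseq, shiftSeq]

private lemma Tseq_aseq (μ : ℂ) (k : ℕ) :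
    Tseq μ (aseq μ (k+1)) = shiftSeq (aseq μ k) := by
  funext n
  cases n with
  | zero => simp [Tseq, shiftSeq, aseq]
  | succ n =>
    show aseq μ (k+1) (n+1) - μ * aseq μ (k+1) n = aseq μ k n
    by_cases h1 : k ≤ n
    · by_cases h2 : k + 1 ≤ n
      · rw [aseq, aseq, aseq, if_pos (by omega : k+1 ≤ n+1), if_pos h2, if_pos h1]
        rw [Nat.choose_succ_succ']
        have e1 : n + 1 - (k+1) = n - k := by omega
        have e2 : n - k = (n - (k+1)) + 1 := by omega
        rw [e1, e2, pow_succ]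
        push_cast
        ring
      · have hk : k = n := by omega
        subst hk
        rw [aseq, aseq, aseq, if_pos (by omega : k+1 ≤ k+1), if_neg h2, if_pos (le_refl k)]
        simp [Nat.choose_self]
    · rw [aseq, aseq, aseq, if_neg (by omega : ¬ (k+1 ≤ n+1)), if_neg (by omega : ¬ (k+1 ≤ n)),
        if_neg h1]
      ring

private lemma Tseq_iter_aseq (μ : ℂ) (k : ℕ) :
    (Tseq μ)^[k] (aseq μ k) = shiftSeq^[k] (aseq μ 0) := by
  induction k with
  | zero => rfl
  | succ k ih =>
    have hcomm : Function.Commute (Tseq μ) shiftSeq := fun x => Tseq_shift μ x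
    rw [Function.iterate_succ_apply, Tseq_aseq μ k]
    have hcomm2 : (Tseq μ)^[k] (shiftSeq (aseq μ k)) = shiftSeq ((Tseq μ)^[k] (aseq μ k)) :=
      (hcomm.iterate_left k) (aseq μ k)
    rw [hcomm2, ih]
    exact (Function.iterate_succ_apply' shiftSeq k _).symm

private lemma shiftSeq_iter_add (k : ℕ) : ∀ (a : ℕ → ℂ) (n : ℕ), shiftSeq^[k] a (n + k) = a n := by
  induction k with
  | zero => intro a n; simp
  | succ k ih =>
    intro a n
    rw [Function.iterate_succ_apply]
    have : n + (k+1) = (n+1) + k := by omega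
    rw [this, ih (shiftSeq a) (n+1)]
    rfl

private lemma shiftSeq_iter_lt (k : ℕ) : ∀ (a : ℕ → ℂ) (n : ℕ), n < k → shiftSeq^[k] a n = 0 := by
  induction k with
  | zero => intro a n h; omega
  | succ k ih =>
    intro a n h
    rw [Function.iterate_succ_apply]
    by_cases h2 : n < k
    · exact ih (shiftSeq a) n h2
    · have he : n = k := by omega
      rw [he]
      have := shiftSeq_iter_add k (shiftSeq a) 0
      simpa [shiftSeq] using this

private lemma tsum_shift {f : ℕ → ℂ} (hf : Summable f) (k : ℕ) (h0 : ∀ n < k, f n = 0) :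
    ∑' n, f n = ∑' n, f (n + k) := by
  rw [← Summable.sum_add_tsum_nat_add k hf]
  rw [Finset.sum_eq_zero (fun i hi => h0 i (Finset.mem_range.mp hi))]
  rw [zero_add]

private lemma G_Tseq {β ν : ℝ} (hβ : 0 < β) (hν : 0 < ν) (μ : ℂ) {a : ℕ → ℂ} (ha : Adm a)
    {t : ℝ} (ht : 0 < t) :
    G β ν (Tseq μ a) t = G β ν a t - μ * frInt β (G β ν a) t := by
  have hs1 : Summable (fun n => a n * pT β ν t n) := summable_G hβ hν ha ht
  have hs2 : Summable (fun n => shiftSeq a n * pT β ν t n) :=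
    summable_G hβ hν (adm_shift ha) ht
  have e1 : G β ν (Tseq μ a) t
      = ∑' n, (a n * pT β ν t n - μ * (shiftSeq a n * pT β ν t n)) := by
    simp only [G, Tseq]
    apply tsum_congr
    intro n
    ring
  rw [e1, Summable.tsum_sub hs1 (hs2.mul_left μ), tsum_mul_left]
  have e2 : ∑' n, shiftSeq a n * pT β ν t n = ∑' n, shiftSeq a (n+1) * pT β ν t (n+1) := by
    rw [Summable.tsum_eq_zero_add hs2]
    simp [shiftSeq]
  have e3 : ∑' n, shiftSeq a (n+1) * pT β ν t (n+1) = frInt β (G β ν a) t := by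
    rw [frInt_G hβ hν hβ ha ht]
    apply tsum_congr
    intro n
    rw [pT]
    simp only [Nat.cast_add, Nat.cast_one]
    rw [show β * ((n:ℝ)+1) + ν - 1 = β * n + ν + β - 1 by ring,
      show β * ((n:ℝ)+1) + ν = β * n + ν + β by ring]
    rw [mul_div_assoc]
    simp [shiftSeq]
  simp only [G]
  rw [e2, e3]

private lemma frInt_congr {γ : ℝ} {f g : ℝ → ℂ} (h : ∀ x, 0 < x → f x = g x) {t : ℝ}
    (ht : 0 < t) : frInt γ f t = frInt γ g t := by
  rw [frInt, frInt, intervalIntegral.integral_of_le ht.le,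
    intervalIntegral.integral_of_le ht.le]
  congr 1
  apply setIntegral_congr_fun measurableSet_Ioc
  intro τ hτ
  simp only
  rw [h τ hτ.1]

private lemma iterate_G {β ν : ℝ} (hβ : 0 < β) (hν : 0 < ν) (μ : ℂ) (j : ℕ) :
    ∀ (a : ℕ → ℂ), Adm a → ∀ (f : ℝ → ℂ), (∀ x, 0 < x → f x = G β ν a x) →
      ∀ t : ℝ, 0 < t →
      ((fun g : ℝ → ℂ => fun x => g x - μ * frInt β g x)^[j] f) t = G β ν ((Tseq μ)^[j] a) t := by
  induction j with
  | zero =>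
    intro a ha f hf t ht
    exact hf t ht
  | succ j ih =>
    intro a ha f hf t ht
    rw [Function.iterate_succ_apply, Function.iterate_succ_apply]
    apply ih (Tseq μ a) (adm_Tseq ha) _ ?_ t ht
    intro x hx
    show f x - μ * frInt β f x = G β ν (Tseq μ a) x
    rw [hf x hx, frInt_congr hf hx, G_Tseq hβ hν μ ha hx]



private noncomputable def mlC (β ν : ℝ) (k n : ℕ) : ℂ :=
  (((n + k).descFactorial k : ℕ) : ℂ) / ((Real.Gamma (β * ((n : ℝ) + k) + ν) : ℝ) : ℂ)

private noncomputable def E (β ν : ℝ) (k : ℕ) (z : ℂ) : ℂ := ∑' n, mlC β ν k n * z ^ n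

private lemma norm_mlC {β ν : ℝ} (hβ : 0 < β) (hν : 0 < ν) (k n : ℕ) :
    ‖mlC β ν k n‖ = ((n + k).descFactorial k : ℝ) / Real.Gamma (β * n + (β * k + ν)) := by
  have hΓ : 0 < Real.Gamma (β * ((n:ℝ) + k) + ν) := Real.Gamma_pos_of_pos (by positivity)
  rw [mlC, norm_div, Complex.norm_natCast, Complex.norm_real, Real.norm_of_nonneg hΓ.le,
    show β * ((n:ℝ) + k) + ν = β * n + (β * k + ν) by ring]

private lemma summable_mlC_aux {β ν : ℝ} (hβ : 0 < β) (hν : 0 < ν) (k : ℕ) {R : ℝ}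
    (hR : 0 ≤ R) :
    Summable (fun n : ℕ => ‖mlC β ν k n‖ * ((n : ℝ) + 1) * R ^ n) := by
  have hc : (0:ℝ) < β * k + ν := by positivity
  have hbig : Summable (fun n : ℕ =>
      ((k:ℝ) + 1) ^ k * ((2 ^ (k+1) * R) ^ n / Real.Gamma (β * n + (β * k + ν)))) :=
    (summable_master hβ hc (by positivity)).mul_left _
  apply Summable.of_nonneg_of_le _ _ hbig
  · intro n; positivity
  · intro n
    rw [norm_mlC hβ hν k n]
    have hΓ : 0 < Real.Gamma (β * n + (β * k + ν)) := Real.Gamma_pos_of_pos (by positivity)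
    have h2n : ((n:ℝ) + 1) ≤ 2 ^ n := by
      have := Nat.lt_two_pow_self (n := n)
      exact_mod_cast Nat.succ_le_of_lt this
    have hdesc : ((n + k).descFactorial k : ℝ) ≤ ((k:ℝ) + 1) ^ k * (2 ^ k) ^ n := by
      have h1 : ((n + k).descFactorial k : ℝ) ≤ ((n + k : ℕ) : ℝ) ^ k := by
        exact_mod_cast Nat.descFactorial_le_pow (n + k) k
      have h2 : ((n + k : ℕ) : ℝ) ≤ ((k:ℝ) + 1) * ((n:ℝ) + 1) := by
        push_cast; nlinarith [Nat.cast_nonneg (α := ℝ) n, Nat.cast_nonneg (α := ℝ) k]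
      have h3 : ((n + k : ℕ) : ℝ) ^ k ≤ (((k:ℝ) + 1) * ((n:ℝ) + 1)) ^ k :=
        pow_le_pow_left₀ (by positivity) h2 k
      have h4 : (((k:ℝ) + 1) * ((n:ℝ) + 1)) ^ k ≤ (((k:ℝ) + 1) * 2 ^ n) ^ k :=
        pow_le_pow_left₀ (by positivity) (by nlinarith [Nat.cast_nonneg (α := ℝ) k]) k
      calc ((n + k).descFactorial k : ℝ) ≤ ((n + k : ℕ) : ℝ) ^ k := h1
        _ ≤ (((k:ℝ) + 1) * ((n:ℝ) + 1)) ^ k := h3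
        _ ≤ (((k:ℝ) + 1) * 2 ^ n) ^ k := h4
        _ = ((k:ℝ) + 1) ^ k * (2 ^ k) ^ n := by
            rw [mul_pow, ← pow_mul, ← pow_mul, Nat.mul_comm]
    calc ((n + k).descFactorial k : ℝ) / Real.Gamma (β * n + (β * k + ν)) * ((n:ℝ) + 1) * R ^ n
        ≤ (((k:ℝ) + 1) ^ k * (2 ^ k) ^ n) / Real.Gamma (β * n + (β * k + ν)) * (2 ^ n) * R ^ n := by
          gcongr
      _ = ((k:ℝ) + 1) ^ k * ((2 ^ (k+1) * R) ^ n / Real.Gamma (β * n + (β * k + ν))) := by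
          rw [mul_pow, ← pow_mul, ← pow_mul, show (k+1)*n = k*n + n by ring, pow_add]
          ring

private lemma summable_E {β ν : ℝ} (hβ : 0 < β) (hν : 0 < ν) (k : ℕ) (z : ℂ) :
    Summable (fun n : ℕ => mlC β ν k n * z ^ n) := by
  apply Summable.of_norm
  apply Summable.of_nonneg_of_le (fun n => norm_nonneg _) _
    (summable_mlC_aux hβ hν k (norm_nonneg z))
  intro n
  rw [norm_mul, norm_pow]
  have h1 : (1:ℝ) ≤ (n:ℝ) + 1 := by linarith [Nat.cast_nonneg (α := ℝ) n]
  nlinarith [norm_nonneg (mlC β ν k n), pow_nonneg (norm_nonneg z) n,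
    mul_nonneg (norm_nonneg (mlC β ν k n)) (pow_nonneg (norm_nonneg z) n)]

private lemma summable_E' {β ν : ℝ} (hβ : 0 < β) (hν : 0 < ν) (k : ℕ) (z : ℂ) :
    Summable (fun n : ℕ => mlC β ν k n * ((n : ℂ) * z ^ (n - 1))) := by
  apply Summable.of_norm
  apply Summable.of_nonneg_of_le (fun n => norm_nonneg _) _
    (summable_mlC_aux hβ hν k (R := ‖z‖ + 1) (by positivity))
  intro n
  rw [norm_mul, norm_mul, Complex.norm_natCast, norm_pow]
  have h1 : ‖z‖ ^ (n-1) ≤ (‖z‖+1) ^ (n-1) :=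
    pow_le_pow_left₀ (norm_nonneg z) (by linarith) _
  have h2 : (‖z‖+1) ^ (n-1) ≤ (‖z‖+1) ^ n :=
    pow_le_pow_right₀ (by linarith [norm_nonneg z]) (Nat.sub_le n 1)
  have h3 : (n:ℝ) ≤ (n:ℝ) + 1 := by linarith
  calc ‖mlC β ν k n‖ * ((n:ℝ) * ‖z‖ ^ (n-1))
      ≤ ‖mlC β ν k n‖ * (((n:ℝ)+1) * (‖z‖+1) ^ n) :=
        mul_le_mul_of_nonneg_left
          (mul_le_mul h3 (h1.trans h2) (by positivity) (by positivity)) (norm_nonneg _)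
    _ = ‖mlC β ν k n‖ * ((n:ℝ)+1) * (‖z‖+1) ^ n := by ring

private lemma mlC_rec {β ν : ℝ} (k m : ℕ) :
    mlC β ν k (m+1) * ((m:ℂ) + 1) = mlC β ν (k+1) m := by
  have hnat : (m + 1) * ((m + 1 + k).descFactorial k) = (m + (k+1)).descFactorial (k+1) := by
    rw [show m + (k+1) = m + k + 1 by omega, Nat.descFactorial_succ,
      show m + k + 1 - k = m + 1 by omega, show m + 1 + k = m + k + 1 by omega]
  rw [mlC, mlC]
  rw [show β * ((↑(m+1) : ℝ) + k) + ν = β * ((m : ℝ) + (k+1)) + ν by push_cast; try ring]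
  rw [div_mul_eq_mul_div, ← hnat]
  push_cast
  ring

private lemma E_hasDerivAt {β ν : ℝ} (hβ : 0 < β) (hν : 0 < ν) (k : ℕ) (z : ℂ) :
    HasDerivAt (E β ν k) (E β ν (k+1) z) z := by
  set R : ℝ := ‖z‖ + 1 with hR
  have hR1 : (1:ℝ) ≤ R := by rw [hR]; linarith [norm_nonneg z]
  have key : HasDerivAt (fun w => ∑' n, mlC β ν k n * w ^ n)
      (∑' n, mlC β ν k n * ((n:ℂ) * z ^ (n-1))) z := by
    refine hasDerivAt_tsum_of_isPreconnected
      (u := fun n => ‖mlC β ν k n‖ * ((n : ℝ) + 1) * R ^ n) (y₀ := 0)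
      (summable_mlC_aux hβ hν k (by positivity)) Metric.isOpen_ball
      (convex_ball (0:ℂ) R).isPreconnected
      (fun n y _ => (hasDerivAt_pow n y).const_mul (mlC β ν k n))
      (fun n y hy => ?_) (Metric.mem_ball_self (by positivity)) (summable_E hβ hν k 0)
      (by rw [Metric.mem_ball, dist_zero_right]; linarith)
    rw [Metric.mem_ball, dist_zero_right] at hy
    rw [norm_mul, norm_mul, Complex.norm_natCast, norm_pow]
    have h1 : ‖y‖ ^ (n-1) ≤ R ^ (n-1) := pow_le_pow_left₀ (norm_nonneg y) (by linarith) _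
    have h2 : R ^ (n-1) ≤ R ^ n := pow_le_pow_right₀ hR1 (Nat.sub_le n 1)
    have h3 : (n:ℝ) ≤ (n:ℝ) + 1 := by linarith
    calc ‖mlC β ν k n‖ * ((n:ℝ) * ‖y‖ ^ (n-1))
        ≤ ‖mlC β ν k n‖ * (((n:ℝ) + 1) * R ^ n) := by
          apply mul_le_mul_of_nonneg_left _ (norm_nonneg _)
          apply mul_le_mul h3 (h1.trans h2) (by positivity) (by positivity)
      _ = ‖mlC β ν k n‖ * ((n:ℝ) + 1) * R ^ n := by ring
  have heq : ∑' n, mlC β ν k n * ((n:ℂ) * z ^ (n-1)) = E β ν (k+1) z := by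
    rw [Summable.tsum_eq_zero_add (summable_E' hβ hν k z)]
    simp only [Nat.cast_zero, zero_mul, mul_zero, zero_add]
    rw [E]
    apply tsum_congr
    intro m
    have : ((m+1 : ℕ) : ℂ) * z ^ ((m+1) - 1) = ((m:ℂ)+1) * z ^ m := by push_cast; try ring
    rw [this, ← mul_assoc, mul_comm (mlC β ν k (m+1)) _, mul_comm]
    rw [← mlC_rec k m]
    ring
  rw [← heq]
  exact key

private lemma ML_eq_E0 (β ν : ℝ) : ML β ν = E β ν 0 := by
  funext z
  rw [ML, E]
  apply tsum_congr
  intro n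
  rw [mlC]
  simp only [Nat.descFactorial_zero, Nat.cast_zero, add_zero, Nat.cast_one]
  rw [show ((β * (n:ℝ) + ν : ℝ) : ℂ) = (((β * ((n:ℝ) + (0:ℕ)) + ν : ℝ)) : ℂ) by push_cast; try ring]
  rw [Complex.Gamma_ofReal]
  rw [show β * ((n:ℝ) + (0:ℕ)) + ν = β * (n:ℝ) + ν by push_cast; try ring]
  field_simp

private lemma iteratedDeriv_ML {β ν : ℝ} (hβ : 0 < β) (hν : 0 < ν) (k : ℕ) :
    iteratedDeriv k (ML β ν) = E β ν k := by
  induction k with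
  | zero => rw [iteratedDeriv_zero]; exact ML_eq_E0 β ν
  | succ k ih =>
    rw [iteratedDeriv_succ, ih]
    funext z
    exact (E_hasDerivAt hβ hν k z).deriv

private lemma adm_shift_iter (j : ℕ) {a : ℕ → ℂ} (ha : Adm a) : Adm (shiftSeq^[j] a) := by
  induction j with
  | zero => simpa using ha
  | succ j ih =>
    rw [Function.iterate_succ_apply']
    exact adm_shift ih

private lemma start_eq {β ν : ℝ} (hβ : 0 < β) (hν : 0 < ν) (μ : ℂ) (k : ℕ) {x : ℝ} (hx : 0 < x) :
    (((x ^ ((k:ℝ) * β + ν - 1) : ℝ) : ℂ) / (k.factorial : ℂ)) * E β ν k (μ * ((x ^ β : ℝ) : ℂ))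
      = G β ν (aseq μ k) x := by
  have hsum : Summable (fun n => aseq μ k n * pT β ν x n) := summable_G hβ hν (adm_aseq μ k) hx
  have h0 : ∀ n < k, aseq μ k n * pT β ν x n = 0 := by
    intro n hn
    rw [aseq, if_neg (by omega)]
    ring
  rw [G, tsum_shift hsum k h0, E, ← tsum_mul_left]
  apply tsum_congr
  intro m
  rw [aseq, if_pos (Nat.le_add_left k m), Nat.add_sub_cancel, pT, mlC,
    Nat.descFactorial_eq_factorial_mul_choose]
  have hx0 : (0:ℝ) ≤ x := hx.le
  have e1 : (μ * ((x ^ β : ℝ):ℂ))^m = μ^m * ((x ^ (β * (m:ℝ)) : ℝ) : ℂ) := by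
    rw [mul_pow, ← Complex.ofReal_pow, ← Real.rpow_natCast (x ^ β) m, ← Real.rpow_mul hx0]
  have e2 : ((x ^ (β * ((m:ℝ) + (k:ℝ)) + ν - 1) : ℝ) : ℂ)
      = ((x ^ ((k:ℝ) * β + ν - 1) : ℝ) : ℂ) * ((x ^ (β * (m:ℝ)) : ℝ) : ℂ) := by
    rw [← Complex.ofReal_mul, ← Real.rpow_add hx,
      show ((k:ℝ) * β + ν - 1) + β * (m:ℝ) = β * ((m:ℝ) + (k:ℝ)) + ν - 1 by ring]
  have hΓne : ((Real.Gamma (β * ((m:ℝ) + (k:ℝ)) + ν) : ℝ) : ℂ) ≠ 0 := by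
    simpa using (Real.Gamma_pos_of_pos (show (0:ℝ) < β * ((m:ℝ)+(k:ℝ)) + ν by positivity)).ne'
  have hfac : ((k.factorial : ℕ) : ℂ) ≠ 0 := Nat.cast_ne_zero.mpr k.factorial_ne_zero
  rw [e1]
  rw [show ((x ^ (β * ((m+k : ℕ):ℝ) + ν - 1) : ℝ) : ℂ)
      = ((x ^ (β * ((m:ℝ)+(k:ℝ)) + ν - 1) : ℝ) : ℂ) by push_cast; try ring,
    show ((Real.Gamma (β * ((m+k : ℕ):ℝ) + ν) : ℝ) : ℂ)
      = ((Real.Gamma (β * ((m:ℝ)+(k:ℝ)) + ν) : ℝ) : ℂ) by push_cast; try ring]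
  rw [e2]
  push_cast
  field_simp

theorem lemma_1a (β ν : ℝ) (hβ0 : 0 < β) (hβ1 : β ≤ 1) (hν : 0 < ν) (μ : ℂ)
    (k : ℕ) (t : ℝ) (ht : 0 < t) :
    ((fun g : ℝ → ℂ => fun x => g x - μ * frInt β g x)^[k]
        (fun x : ℝ =>
          (((x ^ ((k : ℝ) * β + ν - 1) : ℝ) : ℂ) / (k.factorial : ℂ)) *
            iteratedDeriv k (ML β ν) (μ * ((x ^ β : ℝ) : ℂ)))) t
      = frInt' ((k : ℝ) * β)
          (fun x : ℝ => ((x ^ (ν - 1) : ℝ) : ℂ) * ML β ν (μ * ((x ^ β : ℝ) : ℂ))) t := by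
  have hf : ∀ x : ℝ, 0 < x →
      (fun x : ℝ =>
          (((x ^ ((k : ℝ) * β + ν - 1) : ℝ) : ℂ) / (k.factorial : ℂ)) *
            iteratedDeriv k (ML β ν) (μ * ((x ^ β : ℝ) : ℂ))) x = G β ν (aseq μ k) x := by
    intro x hx
    simp only
    rw [iteratedDeriv_ML hβ0 hν]
    exact start_eq hβ0 hν μ k hx
  have keyL := iterate_G hβ0 hν μ k (aseq μ k) (adm_aseq μ k) _ hf t ht
  rw [keyL, Tseq_iter_aseq]
  have hrhs0 : ∀ x : ℝ, 0 < x →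
      (fun x : ℝ => ((x ^ (ν - 1) : ℝ) : ℂ) * ML β ν (μ * ((x ^ β : ℝ) : ℂ))) x
        = G β ν (aseq μ 0) x := by
    intro x hx
    have h := start_eq hβ0 hν μ 0 (x := x) hx
    rw [show ((0:ℕ):ℝ) * β + ν - 1 = ν - 1 by norm_num] at h
    simp only [Nat.factorial_zero, Nat.cast_one, div_one] at h
    simp only
    rw [← ML_eq_E0] at h
    exact h
  by_cases hk : k = 0
  · subst hk
    rw [frInt', if_pos (by norm_num)]
    simp only [Function.iterate_zero_apply]
    exact (hrhs0 t ht).symm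
  · have hkβ : (0:ℝ) < (k:ℝ) * β :=
      mul_pos (Nat.cast_pos.mpr (Nat.pos_of_ne_zero hk)) hβ0
    rw [frInt', if_neg hkβ.ne']
    rw [frInt_congr hrhs0 ht]
    rw [frInt_G hβ0 hν hkβ (adm_aseq μ 0) ht]
    have hadm : Adm (shiftSeq^[k] (aseq μ 0)) := adm_shift_iter k (adm_aseq μ 0)
    have hsum : Summable (fun n => shiftSeq^[k] (aseq μ 0) n * pT β ν t n) :=
      summable_G hβ0 hν hadm ht
    have h0 : ∀ n < k, shiftSeq^[k] (aseq μ 0) n * pT β ν t n = 0 := by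
      intro n hn
      rw [shiftSeq_iter_lt k _ n hn, zero_mul]
    rw [G, tsum_shift hsum k h0]
    apply tsum_congr
    intro m
    rw [shiftSeq_iter_add k (aseq μ 0) m, pT]
    rw [show β * ((m + k : ℕ):ℝ) + ν - 1 = β * (m:ℝ) + ν + (k:ℝ)*β - 1 by push_cast; ring,
      show β * ((m + k : ℕ):ℝ) + ν = β * (m:ℝ) + ν + (k:ℝ)*β by push_cast; ring]
    rw [mul_div_assoc]
end

section
/- Let 0 < β₁ < β₂, ν > 0, μ ∈ ℂ, k ∈ ℕ. Then (J^{β₂-β₁} - μ J^{β₂})^k applied to t ↦ (t^{kβ₁+ν-1}/k!) E_{β₁,ν}^{(k)}(μ t^{β₁}) equals J^{kβ₂} applied to t ↦ t^{ν-1} E_{β₁,ν}(μ t^{β₁}). -/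
open MeasureTheory Filter Set

namespace Lemma1bAux

open intervalIntegral


lemma gamma_ratio {x b : ℝ} (hb : 0 < b) (hx : 2 ≤ x) :
    Real.Gamma x * (x - 1) ^ b ≤ Real.Gamma (x + b) := by
  have hx1 : (1:ℝ) < x := by linarith
  have hxm : (0:ℝ) < x - 1 := by linarith
  have hmem1 : x - 1 ∈ Set.Ioi (0:ℝ) := hxm
  have hmem3 : x + b ∈ Set.Ioi (0:ℝ) := by simp; linarith
  have hslope := Real.convexOn_log_Gamma.slope_mono_adjacent hmem1 hmem3
    (by linarith : x - 1 < x) (by linarith : x < x + b)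
  simp only [Function.comp] at hslope
  have hG : Real.Gamma x = (x-1) * Real.Gamma (x-1) := by
    have := Real.Gamma_add_one (s := x - 1) hxm.ne'
    rw [sub_add_cancel] at this
    exact this
  have hGpos : 0 < Real.Gamma (x-1) := Real.Gamma_pos_of_pos hxm
  have hGxpos : 0 < Real.Gamma x := Real.Gamma_pos_of_pos (by linarith)
  have hGxbpos : 0 < Real.Gamma (x+b) := Real.Gamma_pos_of_pos (by linarith)
  have h1 : (Real.log (Real.Gamma x) - Real.log (Real.Gamma (x-1))) / (x - (x-1))
      = Real.log (x-1) := by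
    rw [hG, Real.log_mul hxm.ne' hGpos.ne']
    field_simp
    ring
  rw [h1] at hslope
  -- hslope : log (x-1) ≤ (log Γ(x+b) - log Γ x) / (x + b - x)
  have h2 : x + b - x = b := by ring
  rw [h2] at hslope
  have h3 : b * Real.log (x-1) + Real.log (Real.Gamma x) ≤ Real.log (Real.Gamma (x+b)) := by
    have := mul_le_mul_of_nonneg_left hslope hb.le
    rw [mul_div_cancel₀ _ hb.ne'] at this
    linarith
  have h4 : Real.Gamma x * (x-1)^b = Real.exp (b * Real.log (x-1) + Real.log (Real.Gamma x)) := by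
    rw [Real.exp_add, Real.rpow_def_of_pos hxm, Real.exp_log hGxpos, mul_comm]; ring
  rw [h4, ← Real.exp_log hGxbpos]
  exact Real.exp_le_exp.mpr h3

lemma summable_main {β c : ℝ} (hβ : 0 < β) (hc : 0 < c) (j : ℕ) {r : ℝ} (hr : 0 ≤ r) :
    Summable (fun m : ℕ => (m + 1 : ℝ) ^ j * r ^ m / Real.Gamma (β * m + c)) := by
  rcases eq_or_lt_of_le hr with h0 | hrpos
  · rw [← summable_nat_add_iff 1]
    exact summable_zero.congr (fun m => by rw [← h0]; simp)
  have hpos : ∀ m : ℕ, 0 < (m + 1 : ℝ) ^ j * r ^ m / Real.Gamma (β * m + c) := by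
    intro m
    have h1 : (0:ℝ) < β * m + c := by positivity
    have := Real.Gamma_pos_of_pos h1
    positivity
  have hlin : Tendsto (fun m : ℕ => β * m + c) atTop atTop :=
    Filter.tendsto_atTop_add_const_right _ c
      ((tendsto_natCast_atTop_atTop (R := ℝ)).const_mul_atTop hβ)
  have htend : Tendsto (fun m : ℕ => (β * m + c - 1) ^ β) atTop atTop :=
    (tendsto_rpow_atTop hβ).comp
      (Filter.tendsto_atTop_add_const_right _ (-1) hlin |>.congr (fun m => by ring_nf))
  have hev1 : ∀ᶠ m : ℕ in atTop, 2 ^ (j+1) * r ≤ (β * m + c - 1) ^ β :=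
    htend.eventually_ge_atTop _
  have hev2 : ∀ᶠ m : ℕ in atTop, 2 ≤ β * m + c := hlin.eventually_ge_atTop 2
  apply summable_of_ratio_norm_eventually_le (r := 1/2) (by norm_num)
  filter_upwards [hev1, hev2] with m h1 h2
  have hx : (0:ℝ) < β * m + c := by linarith
  have hx1 : (0:ℝ) < β * m + c - 1 := by linarith
  have hGpos := Real.Gamma_pos_of_pos hx
  have hGpos' := Real.Gamma_pos_of_pos (show (0:ℝ) < β * m + c + β by linarith)
  have hratio := gamma_ratio hβ h2
  rw [Real.norm_of_nonneg (hpos _).le, Real.norm_of_nonneg (hpos _).le]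
  push_cast
  rw [show β * ((m:ℝ)+1) + c = (β * m + c) + β by ring]
  have hXpos : (0:ℝ) < (β * m + c - 1) ^ β := Real.rpow_pos_of_pos hx1 β
  have hb1 : ((m:ℝ)+1+1) ^ j ≤ 2 ^ j * ((m:ℝ)+1) ^ j := by
    rw [← mul_pow]
    apply pow_le_pow_left₀ (by positivity)
    linarith
  have hnum : ((m:ℝ)+1+1) ^ j * r ^ (m+1) ≤ (2 ^ j * ((m:ℝ)+1) ^ j) * (r * r ^ m) := by
    rw [pow_succ]
    calc ((m:ℝ)+1+1) ^ j * (r^m * r) ≤ (2 ^ j * ((m:ℝ)+1) ^ j) * (r^m * r) :=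
          mul_le_mul_of_nonneg_right hb1 (by positivity)
      _ = (2 ^ j * ((m:ℝ)+1) ^ j) * (r * r ^ m) := by ring
  calc ((m:ℝ)+1+1) ^ j * r ^ (m+1) / Real.Gamma ((β * m + c) + β)
      ≤ (2 ^ j * ((m:ℝ)+1) ^ j) * (r * r ^ m) / (Real.Gamma (β * m + c) * (β * m + c - 1) ^ β) :=
        div_le_div₀ (by positivity) hnum (by positivity) hratio
    _ ≤ 1/2 * (((m:ℝ)+1) ^ j * r ^ m / Real.Gamma (β * m + c)) := by
        rw [div_le_iff₀ (by positivity)]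
        have hkey : 2 ^ j * r * 2 ≤ (β * m + c - 1) ^ β := by
          calc 2 ^ j * r * 2 = 2 ^ (j+1) * r := by ring
          _ ≤ _ := h1
        have hnn : (0:ℝ) ≤ ((m:ℝ)+1) ^ j * r ^ m := by positivity
        calc 2 ^ j * ((m:ℝ)+1)^j * (r * r^m)
            = (2^j * r * 2) * (((m:ℝ)+1)^j * r^m) * Real.Gamma (β*m+c) / (2 * Real.Gamma (β*m+c)) := by
              field_simp
          _ ≤ ((β * m + c - 1) ^ β) * (((m:ℝ)+1)^j * r^m) * Real.Gamma (β*m+c) / (2 * Real.Gamma (β*m+c)) := by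
              gcongr
          _ = 1/2 * (((m:ℝ)+1) ^ j * r ^ m / Real.Gamma (β * m + c)) * (Real.Gamma (β*m+c) * (β * m + c - 1) ^ β) := by
              field_simp


-- real integrability of the RL kernel times power
lemma rl_intervalIntegrable {a γ t : ℝ} (ha : 0 < a) (hγ : 0 < γ) (ht : 0 < t) :
    IntervalIntegrable (fun τ : ℝ => (t - τ) ^ (γ - 1) * τ ^ (a - 1)) volume 0 t := by
  have h1 : IntervalIntegrable (fun τ : ℝ => (t - τ) ^ (γ - 1) * τ ^ (a - 1)) volume 0 (t/2) := by
    have hint : IntervalIntegrable (fun τ : ℝ => τ ^ (a - 1)) volume 0 (t/2) :=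
      intervalIntegral.intervalIntegrable_rpow' (by linarith)
    have hcont : ContinuousOn (fun τ : ℝ => (t - τ) ^ (γ - 1)) (uIcc 0 (t/2)) := by
      intro x hx
      rw [uIcc_of_le (by linarith)] at hx
      apply ContinuousAt.continuousWithinAt
      apply ContinuousAt.rpow_const (by fun_prop)
      left; simp only [ne_eq, sub_eq_zero]
      intro h; rw [← h] at hx; exact absurd hx.2 (by linarith)
    simpa [mul_comm] using hint.continuousOn_mul hcont
  have h2 : IntervalIntegrable (fun τ : ℝ => (t - τ) ^ (γ - 1) * τ ^ (a - 1)) volume (t/2) t := by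
    have hint : IntervalIntegrable (fun τ : ℝ => (t - τ) ^ (γ - 1)) volume (t/2) t := by
      have b : IntervalIntegrable (fun τ : ℝ => τ ^ (γ - 1)) volume 0 (t/2) :=
        intervalIntegral.intervalIntegrable_rpow' (by linarith)
      simpa [sub_half] using (b.comp_sub_left t).symm
    have hcont : ContinuousOn (fun τ : ℝ => τ ^ (a - 1)) (uIcc (t/2) t) := by
      intro x hx
      rw [uIcc_of_le (by linarith)] at hx
      apply ContinuousAt.continuousWithinAt
      apply ContinuousAt.rpow_const (by fun_prop)
      left
      have hx0 : 0 < x := lt_of_lt_of_le (by linarith) hx.1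
      exact hx0.ne'
    exact hint.mul_continuousOn hcont
  exact h1.trans h2

lemma rl_integral_eq {a γ t : ℝ} (ha : 0 < a) (hγ : 0 < γ) (ht : 0 < t) :
    ∫ τ in (0:ℝ)..t, (t - τ) ^ (γ - 1) * τ ^ (a - 1)
      = t ^ (a + γ - 1) * (Real.Gamma a * Real.Gamma γ / Real.Gamma (a + γ)) := by
  have key := Complex.betaIntegral_scaled (a : ℂ) (γ : ℂ) ht
  have hcongr : ∀ x ∈ uIcc (0:ℝ) t,
      (x:ℂ) ^ ((a:ℂ) - 1) * ((t:ℂ) - (x:ℂ)) ^ ((γ:ℂ) - 1)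
        = (((t - x) ^ (γ - 1) * x ^ (a - 1) : ℝ) : ℂ) := by
    intro x hx
    rw [uIcc_of_le ht.le] at hx
    have h1 : ((x ^ (a-1) : ℝ) : ℂ) = (x:ℂ) ^ ((a:ℂ) - 1) := by
      rw [Complex.ofReal_cpow hx.1]; push_cast; ring_nf
    have h2 : (((t - x) ^ (γ-1) : ℝ) : ℂ) = ((t:ℂ) - (x:ℂ)) ^ ((γ:ℂ) - 1) := by
      rw [Complex.ofReal_cpow (by linarith [hx.2] : (0:ℝ) ≤ t - x)]; push_cast; ring_nf
    rw [← h1, ← h2]; push_cast; ring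
  rw [intervalIntegral.integral_congr hcongr] at key
  have hofReal : ∫ x in (0:ℝ)..t, (((t - x) ^ (γ - 1) * x ^ (a - 1) : ℝ) : ℂ)
      = ((∫ x in (0:ℝ)..t, (t - x) ^ (γ - 1) * x ^ (a - 1) : ℝ) : ℂ) :=
    intervalIntegral.integral_ofReal
  rw [hofReal] at key
  have hbeta : Complex.betaIntegral (a:ℂ) (γ:ℂ)
      = ((Real.Gamma a * Real.Gamma γ / Real.Gamma (a + γ) : ℝ) : ℂ) := by
    have h := Complex.Gamma_mul_Gamma_eq_betaIntegral
      (by simpa using ha : 0 < (Complex.ofReal a).re) (by simpa using hγ : 0 < (Complex.ofReal γ).re)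
    have hG : Complex.Gamma ((a:ℂ) + (γ:ℂ)) = ((Real.Gamma (a+γ) : ℝ) : ℂ) := by
      rw [← Complex.ofReal_add, Complex.Gamma_ofReal]
    have hGa : Complex.Gamma (a:ℂ) = ((Real.Gamma a : ℝ) : ℂ) := Complex.Gamma_ofReal a
    have hGγ : Complex.Gamma (γ:ℂ) = ((Real.Gamma γ : ℝ) : ℂ) := Complex.Gamma_ofReal γ
    have hne : ((Real.Gamma (a+γ) : ℝ) : ℂ) ≠ 0 := by
      simpa using (Real.Gamma_pos_of_pos (by linarith)).ne'
    rw [hGa, hGγ, hG] at h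
    rw [Complex.ofReal_div, Complex.ofReal_mul, eq_div_iff hne]
    linear_combination -h
  have hpow : ((t:ℂ)) ^ ((a:ℂ) + (γ:ℂ) - 1) = ((t ^ (a + γ - 1) : ℝ) : ℂ) := by
    rw [Complex.ofReal_cpow ht.le]; push_cast; ring_nf
  rw [hbeta, hpow] at key
  have := key
  rw [← Complex.ofReal_mul] at this
  exact_mod_cast this


variable (β₁ ν : ℝ) (μ : ℂ)

/-- Term of the series `G_{k,δ}`. -/
noncomputable def Gterm (k : ℕ) (δ : ℝ) (m : ℕ) (x : ℝ) : ℂ :=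
  (m.choose k : ℂ) * μ ^ (m - k) * ((x ^ (β₁ * m + ν + δ - 1) : ℝ) : ℂ)
    / ((Real.Gamma (β₁ * m + ν + δ) : ℝ) : ℂ)

/-- The series `G_{k,δ}(x) = ∑ C(m,k) μ^{m-k} x^{β₁ m + ν + δ - 1} / Γ(β₁ m + ν + δ)`. -/
noncomputable def Gfun (k : ℕ) (δ : ℝ) (x : ℝ) : ℂ := ∑' m : ℕ, Gterm β₁ ν μ k δ m x

variable {β₁ ν}

lemma Gterm_norm {k : ℕ} {δ : ℝ} {m : ℕ} {x : ℝ} (hx : 0 < x) (h : 0 < β₁ * m + ν + δ) :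
    ‖Gterm β₁ ν μ k δ m x‖
      = (m.choose k : ℝ) * ‖μ‖ ^ (m - k) * x ^ (β₁ * m + ν + δ - 1)
        / Real.Gamma (β₁ * m + ν + δ) := by
  have h1 : (0:ℝ) ≤ x ^ (β₁ * m + ν + δ - 1) := Real.rpow_nonneg hx.le _
  have h2 : (0:ℝ) < Real.Gamma (β₁ * m + ν + δ) := Real.Gamma_pos_of_pos h
  simp [Gterm, norm_div, norm_mul, norm_pow, Complex.norm_real,
    Real.norm_eq_abs, abs_of_nonneg h1, abs_of_nonneg h2.le]

/-- crude bound for the norm of `Gterm`. -/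
lemma Gterm_norm_le {k : ℕ} {δ : ℝ} {m : ℕ} {x : ℝ} (hβ : 0 < β₁) (hx : 0 < x)
    (h : 0 < ν + δ) :
    ‖Gterm β₁ ν μ k δ m x‖
      ≤ x ^ (ν + δ - 1) * ((m + 1 : ℝ) ^ k * (max 1 ‖μ‖ * x ^ β₁) ^ m
          / Real.Gamma (β₁ * m + (ν + δ))) := by
  have hm0 : (0:ℝ) ≤ β₁ * m := mul_nonneg hβ.le (Nat.cast_nonneg m)
  have hpos : (0:ℝ) < β₁ * m + ν + δ := by linarith
  rw [Gterm_norm μ hx hpos]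
  have hsplit : x ^ (β₁ * m + ν + δ - 1) = (x ^ β₁) ^ m * x ^ (ν + δ - 1) := by
    rw [← Real.rpow_natCast (x ^ β₁) m, ← Real.rpow_mul hx.le,
      ← Real.rpow_add hx]
    ring_nf
  have hG : Real.Gamma (β₁ * m + ν + δ) = Real.Gamma (β₁ * m + (ν + δ)) := by ring_nf
  have hΓpos : (0:ℝ) < Real.Gamma (β₁ * m + (ν + δ)) :=
    Real.Gamma_pos_of_pos (by linarith)
  rw [hsplit, hG, ← mul_div_assoc, div_le_div_iff_of_pos_right hΓpos]
  have hchoose : (m.choose k : ℝ) ≤ (m + 1 : ℝ) ^ k := by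
    calc (m.choose k : ℝ) ≤ ((m:ℝ) ^ k) / (k.factorial : ℝ) := Nat.choose_le_pow_div k m
      _ ≤ (m : ℝ) ^ k := by
          apply div_le_self (by positivity)
          exact_mod_cast Nat.one_le_iff_ne_zero.mpr (Nat.factorial_ne_zero k)
      _ ≤ (m + 1 : ℝ) ^ k := by
          apply pow_le_pow_left₀ (by positivity); linarith
  have hμ : ‖μ‖ ^ (m - k) ≤ (max 1 ‖μ‖) ^ m := by
    calc ‖μ‖ ^ (m - k) ≤ (max 1 ‖μ‖) ^ (m - k) :=
          pow_le_pow_left₀ (norm_nonneg μ) (le_max_right 1 ‖μ‖) _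
      _ ≤ (max 1 ‖μ‖) ^ m := pow_le_pow_right₀ (le_max_left 1 ‖μ‖) (Nat.sub_le m k)
  have hxb : (0:ℝ) < x ^ β₁ := Real.rpow_pos_of_pos hx β₁
  rw [mul_pow]
  calc (m.choose k : ℝ) * ‖μ‖ ^ (m - k) * ((x ^ β₁) ^ m * x ^ (ν + δ - 1))
      ≤ (m + 1 : ℝ) ^ k * (max 1 ‖μ‖) ^ m * ((x ^ β₁) ^ m * x ^ (ν + δ - 1)) := by
        apply mul_le_mul_of_nonneg_right _ (by positivity)
        exact mul_le_mul hchoose hμ (by positivity) (by positivity)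
    _ = x ^ (ν + δ - 1) * ((m + 1 : ℝ) ^ k * ((max 1 ‖μ‖) ^ m * (x ^ β₁) ^ m)) := by ring

lemma summable_Gterm_norm {k : ℕ} {δ : ℝ} {x : ℝ} (hβ : 0 < β₁) (hx : 0 < x)
    (h : 0 < ν + δ) :
    Summable (fun m : ℕ => ‖Gterm β₁ ν μ k δ m x‖) := by
  apply Summable.of_nonneg_of_le (fun _ => norm_nonneg _)
    (fun m => Gterm_norm_le μ hβ hx h (k := k) (m := m))
  exact (summable_main hβ h k
    (by positivity : (0:ℝ) ≤ max 1 ‖μ‖ * x ^ β₁)).mul_left (x ^ (ν + δ - 1))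

lemma summable_Gterm {k : ℕ} {δ : ℝ} {x : ℝ} (hβ : 0 < β₁) (hx : 0 < x) (h : 0 < ν + δ) :
    Summable (fun m : ℕ => Gterm β₁ ν μ k δ m x) :=
  (summable_Gterm_norm μ hβ hx h).of_norm

lemma Gterm_eq_coef_mul {k : ℕ} {δ : ℝ} {m : ℕ} {t' γ' τ : ℝ} :
    (((t' - τ) ^ (γ' - 1) : ℝ) : ℂ) * Gterm β₁ ν μ k δ m τ
      = ((m.choose k : ℂ) * μ ^ (m - k)
          / ((Real.Gamma (β₁ * m + ν + δ) : ℝ) : ℂ))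
        * (((t' - τ) ^ (γ' - 1) * τ ^ (β₁ * m + ν + δ - 1) : ℝ) : ℂ) := by
  simp only [Gterm, Complex.ofReal_mul]
  ring

lemma integrableOn_kernel_Gterm {k : ℕ} {δ γ t : ℝ} (hβ : 0 < β₁) (h : 0 < ν + δ)
    (hγ : 0 < γ) (ht : 0 < t) (m : ℕ) :
    IntegrableOn (fun τ : ℝ => (((t - τ) ^ (γ - 1) : ℝ) : ℂ) * Gterm β₁ ν μ k δ m τ)
      (Ioc 0 t) volume := by
  have hm0 : (0:ℝ) ≤ β₁ * m := mul_nonneg hβ.le (Nat.cast_nonneg m)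
  have ha : (0:ℝ) < β₁ * m + ν + δ := by linarith
  have base : IntegrableOn (fun τ : ℝ => (t - τ) ^ (γ - 1) * τ ^ (β₁ * m + ν + δ - 1))
      (Ioc 0 t) volume :=
    (intervalIntegrable_iff_integrableOn_Ioc_of_le ht.le).1 (rl_intervalIntegrable ha hγ ht)
  have base' : IntegrableOn
      (fun τ : ℝ => (((t - τ) ^ (γ - 1) * τ ^ (β₁ * m + ν + δ - 1) : ℝ) : ℂ))
      (Ioc 0 t) volume := base.ofReal
  exact (base'.const_mul _).congr
    (Filter.Eventually.of_forall (fun τ => (Gterm_eq_coef_mul μ).symm))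

lemma integral_norm_kernel_Gterm {k : ℕ} {δ γ t : ℝ} (hβ : 0 < β₁) (h : 0 < ν + δ)
    (hγ : 0 < γ) (ht : 0 < t) (m : ℕ) :
    ∫ τ in Ioc (0:ℝ) t, ‖(((t - τ) ^ (γ - 1) : ℝ) : ℂ) * Gterm β₁ ν μ k δ m τ‖
      = Real.Gamma γ * ‖Gterm β₁ ν μ k (δ + γ) m t‖ := by
  have hm0 : (0:ℝ) ≤ β₁ * m := mul_nonneg hβ.le (Nat.cast_nonneg m)
  have ha : (0:ℝ) < β₁ * m + ν + δ := by linarith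
  have hΓa : (0:ℝ) < Real.Gamma (β₁ * m + ν + δ) := Real.Gamma_pos_of_pos ha
  have hstep : ∀ τ ∈ Ioc (0:ℝ) t,
      ‖(((t - τ) ^ (γ - 1) : ℝ) : ℂ) * Gterm β₁ ν μ k δ m τ‖
        = ((m.choose k : ℝ) * ‖μ‖ ^ (m - k) / Real.Gamma (β₁ * m + ν + δ))
            * ((t - τ) ^ (γ - 1) * τ ^ (β₁ * m + ν + δ - 1)) := by
    intro τ hτ
    rw [norm_mul, Gterm_norm μ hτ.1 ha, Complex.norm_real, Real.norm_eq_abs,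
      abs_of_nonneg (Real.rpow_nonneg (by linarith [hτ.2] : (0:ℝ) ≤ t - τ) _)]
    ring
  rw [setIntegral_congr_fun measurableSet_Ioc hstep, MeasureTheory.integral_const_mul _,
    ← intervalIntegral.integral_of_le ht.le, rl_integral_eq ha hγ ht]
  have hb : (0:ℝ) < β₁ * m + ν + (δ + γ) := by linarith
  rw [Gterm_norm μ ht hb]
  have hΓγ : (0:ℝ) < Real.Gamma γ := Real.Gamma_pos_of_pos hγ
  have hΓb : (0:ℝ) < Real.Gamma (β₁ * m + ν + δ + γ) := Real.Gamma_pos_of_pos (by linarith)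
  have harg : β₁ * m + ν + (δ + γ) = β₁ * m + ν + δ + γ := by ring
  rw [harg]
  field_simp

lemma frInt_Gfun {k : ℕ} {δ γ t : ℝ} (hβ : 0 < β₁) (h : 0 < ν + δ) (hγ : 0 < γ)
    (ht : 0 < t) :
    frInt γ (Gfun β₁ ν μ k δ) t = Gfun β₁ ν μ k (δ + γ) t := by
  have hΓγ : (0:ℝ) < Real.Gamma γ := Real.Gamma_pos_of_pos hγ
  rw [frInt, intervalIntegral.integral_of_le ht.le]
  have hpt : ∀ τ : ℝ, (((t - τ) ^ (γ - 1) : ℝ) : ℂ) * Gfun β₁ ν μ k δ τ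
      = ∑' m : ℕ, (((t - τ) ^ (γ - 1) : ℝ) : ℂ) * Gterm β₁ ν μ k δ m τ := by
    intro τ
    rw [Gfun, tsum_mul_left]
  simp_rw [hpt]
  rw [← MeasureTheory.integral_tsum_of_summable_integral_norm
      (fun m => integrableOn_kernel_Gterm μ hβ h hγ ht m)]
  · rw [← tsum_mul_left]
    rw [Gfun]
    congr 1
    funext m
    -- `Γ(γ)⁻¹ * ∫ kernel * Gterm = Gterm (δ+γ) at t`
    have : ∫ τ in Ioc (0:ℝ) t, (((t - τ) ^ (γ - 1) : ℝ) : ℂ) * Gterm β₁ ν μ k δ m τ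
        = ((m.choose k : ℂ) * μ ^ (m - k) / ((Real.Gamma (β₁ * m + ν + δ) : ℝ) : ℂ))
          * ((t ^ (β₁ * m + ν + δ + γ - 1)
              * (Real.Gamma (β₁ * m + ν + δ) * Real.Gamma γ
                / Real.Gamma (β₁ * m + ν + δ + γ)) : ℝ) : ℂ) := by
      have hm0 : (0:ℝ) ≤ β₁ * m := mul_nonneg hβ.le (Nat.cast_nonneg m)
      have ha : (0:ℝ) < β₁ * m + ν + δ := by linarith
      simp_rw [Gterm_eq_coef_mul μ]
      rw [MeasureTheory.integral_const_mul _,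
        ← intervalIntegral.integral_of_le ht.le, intervalIntegral.integral_ofReal,
        rl_integral_eq ha hγ ht]
    rw [this]
    have hm0 : (0:ℝ) ≤ β₁ * m := mul_nonneg hβ.le (Nat.cast_nonneg m)
    have ha : (0:ℝ) < β₁ * m + ν + δ := by linarith
    have hΓa : (0:ℝ) < Real.Gamma (β₁ * m + ν + δ) := Real.Gamma_pos_of_pos ha
    have hΓb : (0:ℝ) < Real.Gamma (β₁ * m + ν + δ + γ) :=
      Real.Gamma_pos_of_pos (by linarith)
    rw [Gterm]
    have harg : β₁ * m + ν + (δ + γ) = β₁ * m + ν + δ + γ := by ring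
    rw [harg]
    push_cast
    have hΓγ' : ((Real.Gamma γ : ℝ) : ℂ) ≠ 0 := by exact_mod_cast hΓγ.ne'
    have hΓa' : ((Real.Gamma (β₁ * m + ν + δ) : ℝ) : ℂ) ≠ 0 := by exact_mod_cast hΓa.ne'
    have hΓb' : ((Real.Gamma (β₁ * m + ν + δ + γ) : ℝ) : ℂ) ≠ 0 := by exact_mod_cast hΓb.ne'
    field_simp
  · apply Summable.congr ((summable_Gterm_norm μ hβ ht
      (by linarith : (0:ℝ) < ν + (δ + γ)) (k := k)).mul_left (Real.Gamma γ))
    intro m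
    exact (integral_norm_kernel_Gterm μ hβ h hγ ht m).symm

lemma Gterm_pascal {k m : ℕ} {δ' δ'' t : ℝ} (hrel : δ'' = δ' + β₁) :
    Gterm β₁ ν μ (k+1) δ' (m+1) t - μ * Gterm β₁ ν μ (k+1) δ'' m t
      = Gterm β₁ ν μ k δ'' m t := by
  have harg : β₁ * ((m:ℝ)+1) + ν + δ' = β₁ * m + ν + δ'' := by rw [hrel]; ring
  simp only [Gterm, Nat.cast_add, Nat.cast_one, harg]
  have hsub : (m+1) - (k+1) = m - k := by omega
  rw [hsub, Nat.choose_succ_succ (m) (k)]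
  rcases le_or_gt (k+1) m with hmk | hmk
  · have h1 : m - k = (m - (k+1)) + 1 := by omega
    rw [h1, pow_succ]
    push_cast
    ring
  · have h1 : m.choose (k+1) = 0 := Nat.choose_eq_zero_of_lt hmk
    rw [h1]
    push_cast
    ring

lemma Gfun_shift {k : ℕ} {δ' : ℝ} {t : ℝ} :
    Gfun β₁ ν μ (k+1) δ' t = ∑' m : ℕ, Gterm β₁ ν μ (k+1) δ' (m+1) t := by
  rw [Gfun]
  refine (Function.Injective.tsum_eq (g := fun m : ℕ => m + 1)
    (add_left_injective 1) ?_).symm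
  intro m hm
  rcases Nat.eq_zero_or_pos m with rfl | hmpos
  · exfalso
    apply hm
    simp [Gterm, Nat.choose_eq_zero_of_lt (Nat.succ_pos k)]
  · exact ⟨m - 1, Nat.succ_pred_eq_of_pos hmpos⟩

lemma Gfun_step {k : ℕ} {δ' δ'' t : ℝ} (hβ : 0 < β₁) (ht : 0 < t)
    (hν' : 0 < ν + δ') (hrel : δ'' = δ' + β₁) :
    Gfun β₁ ν μ (k+1) δ' t - μ * Gfun β₁ ν μ (k+1) δ'' t = Gfun β₁ ν μ k δ'' t := by
  have hν'' : 0 < ν + δ'' := by rw [hrel]; linarith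
  have hs1 : Summable (fun m : ℕ => Gterm β₁ ν μ (k+1) δ' (m+1) t) :=
    (summable_Gterm μ hβ ht hν').comp_injective (fun a b h => by omega)
  have hs2 : Summable (fun m : ℕ => μ * Gterm β₁ ν μ (k+1) δ'' m t) :=
    (summable_Gterm μ hβ ht hν'').mul_left μ
  rw [Gfun_shift]
  rw [show μ * Gfun β₁ ν μ (k+1) δ'' t = ∑' m : ℕ, μ * Gterm β₁ ν μ (k+1) δ'' m t from
    (tsum_mul_left).symm]
  rw [← Summable.tsum_sub hs1 hs2, Gfun]
  congr 1
  funext m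
  exact Gterm_pascal μ hrel

/-- coefficients of the `k`-th derivative of the Mittag-Leffler function. -/
noncomputable def MLcoef (b v : ℝ) (k m : ℕ) : ℂ :=
  (((m+k).descFactorial k : ℕ) : ℂ) / ((Real.Gamma (b * (m+k) + v) : ℝ) : ℂ)

lemma MLcoef_norm_le (hβ : 0 < β₁) (hν : 0 < ν) (k m : ℕ) :
    ‖MLcoef β₁ ν k m‖
      ≤ (k.factorial : ℝ) * ((k+1:ℝ)) ^ k
        * ((m + 1 : ℝ) ^ k / Real.Gamma (β₁ * m + (β₁ * k + ν))) := by
  have harg : β₁ * ((m:ℝ)+(k:ℝ)) + ν = β₁ * m + (β₁ * k + ν) := by ring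
  have hpos : (0:ℝ) < β₁ * m + (β₁ * k + ν) := by
    have h1 : (0:ℝ) ≤ β₁ * m := by positivity
    have h2 : (0:ℝ) ≤ β₁ * k := by positivity
    linarith
  have hΓ : (0:ℝ) < Real.Gamma (β₁ * ((m:ℝ)+(k:ℝ)) + ν) := by
    rw [harg]; exact Real.Gamma_pos_of_pos hpos
  have hd : (((m+k).descFactorial k : ℕ) : ℝ)
      ≤ (k.factorial : ℝ) * ((k+1:ℝ)) ^ k * (m + 1 : ℝ) ^ k := by
    rw [Nat.descFactorial_eq_factorial_mul_choose]
    push_cast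
    have hch : ((m+k).choose k : ℝ) ≤ ((k+1:ℝ) * (m+1:ℝ)) ^ k := by
      calc ((m+k).choose k : ℝ) ≤ (((m+k):ℕ):ℝ) ^ k / (k.factorial : ℝ) :=
            Nat.choose_le_pow_div k (m+k)
        _ ≤ (((m+k):ℕ):ℝ) ^ k := by
            apply div_le_self (by positivity)
            exact_mod_cast Nat.one_le_iff_ne_zero.mpr (Nat.factorial_ne_zero k)
        _ ≤ ((k+1:ℝ) * (m+1:ℝ)) ^ k := by
            apply pow_le_pow_left₀ (by positivity)
            push_cast
            nlinarith [Nat.cast_nonneg (α := ℝ) m, Nat.cast_nonneg (α := ℝ) k]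
    calc (k.factorial : ℝ) * ((m+k).choose k : ℝ)
        ≤ (k.factorial : ℝ) * ((k+1:ℝ) * (m+1:ℝ)) ^ k :=
          mul_le_mul_of_nonneg_left hch (by positivity)
      _ = (k.factorial : ℝ) * ((k+1:ℝ)) ^ k * (m + 1 : ℝ) ^ k := by rw [mul_pow]; ring
  rw [MLcoef, norm_div, Complex.norm_natCast, Complex.norm_real, Real.norm_eq_abs]
  push_cast
  rw [abs_of_pos hΓ, harg, div_le_iff₀ (Real.Gamma_pos_of_pos hpos)]
  calc (((m+k).descFactorial k : ℕ) : ℝ)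
      ≤ (k.factorial : ℝ) * ((k+1:ℝ)) ^ k * (m + 1 : ℝ) ^ k := hd
    _ = (k.factorial : ℝ) * ((k+1:ℝ)) ^ k
        * ((m + 1 : ℝ) ^ k / Real.Gamma (β₁ * m + (β₁ * k + ν)))
        * Real.Gamma (β₁ * m + (β₁ * k + ν)) := by
        field_simp
  -- done

lemma summable_MLterm (hβ : 0 < β₁) (hν : 0 < ν) (k : ℕ) (w : ℂ) :
    Summable (fun m : ℕ => MLcoef β₁ ν k m * w ^ m) := by
  have hc : (0:ℝ) < β₁ * k + ν := by positivity
  apply Summable.of_norm_bounded (((summable_main hβ hc k (norm_nonneg w)).mul_left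
    ((k.factorial : ℝ) * ((k+1:ℝ)) ^ k)))
  intro m
  rw [norm_mul, norm_pow]
  calc ‖MLcoef β₁ ν k m‖ * ‖w‖ ^ m
      ≤ ((k.factorial : ℝ) * ((k+1:ℝ)) ^ k
          * ((m + 1 : ℝ) ^ k / Real.Gamma (β₁ * m + (β₁ * k + ν)))) * ‖w‖ ^ m := by
        apply mul_le_mul_of_nonneg_right (MLcoef_norm_le hβ hν k m) (by positivity)
    _ = (k.factorial : ℝ) * ((k+1:ℝ)) ^ k
        * ((m + 1 : ℝ) ^ k * ‖w‖ ^ m / Real.Gamma (β₁ * m + (β₁ * k + ν))) := by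
        ring

lemma hasDerivAt_MLseries (hβ : 0 < β₁) (hν : 0 < ν) (k : ℕ) (z : ℂ) :
    HasDerivAt (fun w : ℂ => ∑' m : ℕ, MLcoef β₁ ν k m * w ^ m)
      (∑' m : ℕ, MLcoef β₁ ν k m * (m * z ^ (m - 1))) z := by
  set R : ℝ := ‖z‖ + 1 with hR
  have hR1 : (1:ℝ) ≤ R := by rw [hR]; linarith [norm_nonneg z]
  have hc : (0:ℝ) < β₁ * k + ν := by positivity
  have hu : Summable (fun m : ℕ =>
      ((k.factorial : ℝ) * ((k+1:ℝ)) ^ k)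
        * ((m + 1 : ℝ) ^ (k+1) * R ^ m / Real.Gamma (β₁ * m + (β₁ * k + ν)))) :=
    (summable_main hβ hc (k+1) (by linarith : (0:ℝ) ≤ R)).mul_left _
  apply hasDerivAt_tsum_of_isPreconnected hu (Metric.isOpen_ball)
    (convex_ball (0:ℂ) R).isPreconnected
    (g' := fun m w => MLcoef β₁ ν k m * (m * w ^ (m - 1)))
    (fun m y _ => (hasDerivAt_pow m y).const_mul _)
    ?_ (Metric.mem_ball_self (by linarith) : (0:ℂ) ∈ Metric.ball 0 R)
    (summable_MLterm hβ hν k 0)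
    (by simpa [Metric.mem_ball, dist_zero_right, hR] using lt_add_one ‖z‖ : z ∈ Metric.ball (0:ℂ) R)
  intro m y hy
  have hyR : ‖y‖ ≤ R := le_of_lt (by simpa [dist_zero_right] using hy)
  rw [norm_mul, norm_mul, Complex.norm_natCast, norm_pow]
  have h1 : ‖y‖ ^ (m-1) ≤ R ^ m :=
    le_trans (pow_le_pow_left₀ (norm_nonneg y) hyR _) (pow_le_pow_right₀ hR1 (Nat.sub_le m 1))
  have h2 : (m:ℝ) * ‖y‖ ^ (m-1) ≤ ((m:ℝ)+1) * R ^ m := by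
    apply mul_le_mul (by linarith) h1 (by positivity) (by linarith [Nat.cast_nonneg (α := ℝ) m])
  calc ‖MLcoef β₁ ν k m‖ * ((m:ℝ) * ‖y‖ ^ (m-1))
      ≤ ((k.factorial : ℝ) * ((k+1:ℝ)) ^ k
          * ((m + 1 : ℝ) ^ k / Real.Gamma (β₁ * m + (β₁ * k + ν)))) * (((m:ℝ)+1) * R ^ m) := by
        apply mul_le_mul (MLcoef_norm_le hβ hν k m) h2 (by positivity) ?_
        have hΓ : (0:ℝ) < Real.Gamma (β₁ * m + (β₁ * k + ν)) := by
          apply Real.Gamma_pos_of_pos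
          have h3 : (0:ℝ) ≤ β₁ * m := by positivity
          have h4 : (0:ℝ) ≤ β₁ * k := by positivity
          linarith
        positivity
    _ = ((k.factorial : ℝ) * ((k+1:ℝ)) ^ k)
        * ((m + 1 : ℝ) ^ (k+1) * R ^ m / Real.Gamma (β₁ * m + (β₁ * k + ν))) := by
        rw [pow_succ]; ring

lemma iteratedDeriv_ML (hβ : 0 < β₁) (hν : 0 < ν) (k : ℕ) (z : ℂ) :
    iteratedDeriv k (ML β₁ ν) z = ∑' m : ℕ, MLcoef β₁ ν k m * z ^ m := by
  induction k generalizing z with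
  | zero =>
    rw [iteratedDeriv_zero, ML]
    congr 1
    funext n
    rw [MLcoef, Complex.Gamma_ofReal]
    simp only [Nat.add_zero, Nat.descFactorial_zero, Nat.cast_one, Nat.cast_zero, add_zero]
    push_cast
    ring_nf
  | succ k IH =>
    rw [iteratedDeriv_succ]
    have hfun : iteratedDeriv k (ML β₁ ν) = fun w => ∑' m : ℕ, MLcoef β₁ ν k m * w ^ m :=
      funext IH
    rw [hfun, (hasDerivAt_MLseries hβ hν k z).deriv]
    have hshift : ∑' m : ℕ, MLcoef β₁ ν k m * ((m:ℂ) * z ^ (m-1))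
        = ∑' m : ℕ, MLcoef β₁ ν k (m+1) * (((m:ℂ)+1) * z ^ m) := by
      refine (Function.Injective.tsum_eq (g := fun m : ℕ => m + 1)
        (add_left_injective 1) ?_).symm.trans ?_
      · intro m hm
        rcases Nat.eq_zero_or_pos m with rfl | hmpos
        · exfalso; apply hm; simp
        · exact ⟨m - 1, Nat.succ_pred_eq_of_pos hmpos⟩
      · congr 1
        funext m
        push_cast [Nat.add_sub_cancel]
        all_goals ring
    rw [hshift]
    congr 1
    funext m
    rw [MLcoef, MLcoef]
    have hn : m + (k+1) = (m+1) + k := by omega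
    rw [hn, Nat.descFactorial_succ]
    have hsub : (m+1) + k - k = m + 1 := by omega
    rw [hsub]
    have harg : β₁ * (((m:ℝ)+1) + (k:ℝ)) + ν = β₁ * ((m:ℝ) + ((k:ℝ)+1)) + ν := by ring
    push_cast
    rw [harg]
    ring


lemma fk_eq_Gfun (hβ : 0 < β₁) (hν : 0 < ν) (k : ℕ) {x : ℝ} (hx : 0 < x) :
    (((x ^ ((k : ℝ) * β₁ + ν - 1) : ℝ) : ℂ) / (k.factorial : ℂ)) *
        iteratedDeriv k (ML β₁ ν) (μ * ((x ^ β₁ : ℝ) : ℂ))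
      = Gfun β₁ ν μ k 0 x := by
  rw [iteratedDeriv_ML hβ hν, Gfun]
  have hR : ∑' m : ℕ, Gterm β₁ ν μ k 0 m x = ∑' m : ℕ, Gterm β₁ ν μ k 0 (m+k) x := by
    refine (Function.Injective.tsum_eq (g := fun m : ℕ => m + k)
      (add_left_injective k) ?_).symm
    intro m hm
    rcases lt_or_ge m k with hlt | hge
    · exfalso; apply hm; simp [Gterm, Nat.choose_eq_zero_of_lt hlt]
    · exact ⟨m - k, Nat.sub_add_cancel hge⟩
  rw [hR, ← tsum_mul_left]
  congr 1
  funext m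
  rw [MLcoef, Gterm, Nat.add_sub_cancel, Nat.descFactorial_eq_factorial_mul_choose]
  rw [mul_pow]
  have hX : ((x ^ β₁ : ℝ) : ℂ) ^ m = ((x ^ (β₁ * m) : ℝ) : ℂ) := by
    rw [← Complex.ofReal_pow, ← Real.rpow_natCast (x ^ β₁) m, ← Real.rpow_mul hx.le]
  rw [hX]
  have hcomb : (x ^ ((k:ℝ) * β₁ + ν - 1) : ℝ) * (x ^ (β₁ * m) : ℝ)
      = (x ^ (β₁ * ((m:ℝ) + (k:ℝ)) + ν - 1) : ℝ) := by
    rw [← Real.rpow_add hx]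
    congr 1
    ring
  have harg : β₁ * (((m:ℕ)+(k:ℕ) : ℕ) : ℝ) + ν + 0 = β₁ * ((m:ℝ) + (k:ℝ)) + ν := by
    push_cast; ring
  have hΓpos : (0:ℝ) < Real.Gamma (β₁ * ((m:ℝ) + (k:ℝ)) + ν) := by
    apply Real.Gamma_pos_of_pos
    have h1 : (0:ℝ) ≤ β₁ * m := by positivity
    have h2 : (0:ℝ) ≤ β₁ * k := by positivity
    linarith
  have hΓne : ((Real.Gamma (β₁ * ((m:ℝ) + (k:ℝ)) + ν) : ℝ) : ℂ) ≠ 0 := by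
    exact_mod_cast hΓpos.ne'
  have hfac : ((k.factorial : ℕ) : ℂ) ≠ 0 := by
    exact_mod_cast k.factorial_ne_zero
  rw [harg, ← hcomb, Complex.ofReal_mul]
  push_cast
  field_simp

lemma frInt_congr {γ t : ℝ} (ht : 0 < t) {f g : ℝ → ℂ} (h : ∀ x, 0 < x → f x = g x) :
    frInt γ f t = frInt γ g t := by
  rw [frInt, frInt]
  congr 1
  apply intervalIntegral.integral_congr_ae
  apply MeasureTheory.ae_of_all
  intro x hx
  rw [Set.uIoc_of_le ht.le] at hx
  rw [h x hx.1]

end Lemma1bAux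

open Lemma1bAux in
theorem lemma_1b (β₁ β₂ ν : ℝ) (hβ1 : 0 < β₁) (hβ12 : β₁ < β₂) (hν : 0 < ν)
    (μ : ℂ) (k : ℕ) (t : ℝ) (ht : 0 < t) :
    ((fun g : ℝ → ℂ => fun x => frInt (β₂ - β₁) g x - μ * frInt β₂ g x)^[k]
        (fun x : ℝ =>
          (((x ^ ((k : ℝ) * β₁ + ν - 1) : ℝ) : ℂ) / (k.factorial : ℂ)) *
            iteratedDeriv k (ML β₁ ν) (μ * ((x ^ β₁ : ℝ) : ℂ)))) t
      = frInt' ((k : ℝ) * β₂)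
          (fun x : ℝ => ((x ^ (ν - 1) : ℝ) : ℂ) * ML β₁ ν (μ * ((x ^ β₁ : ℝ) : ℂ))) t := by
  have hβ2 : 0 < β₂ := lt_trans hβ1 hβ12
  have hβd : 0 < β₂ - β₁ := by linarith
  -- the starting function and the base
  set f₀ : ℝ → ℂ := fun x : ℝ => ((x ^ (ν - 1) : ℝ) : ℂ) * ML β₁ ν (μ * ((x ^ β₁ : ℝ) : ℂ))
    with hf₀
  have hf₀G : ∀ x : ℝ, 0 < x → f₀ x = Gfun β₁ ν μ 0 0 x := by
    intro x hx
    have := fk_eq_Gfun μ hβ1 hν 0 hx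
    simpa using this
  -- main induction
  have key : ∀ j : ℕ, j ≤ k → ∀ x : ℝ, 0 < x →
      ((fun g : ℝ → ℂ => fun x => frInt (β₂ - β₁) g x - μ * frInt β₂ g x)^[j]
        (fun x : ℝ =>
          (((x ^ ((k : ℝ) * β₁ + ν - 1) : ℝ) : ℂ) / (k.factorial : ℂ)) *
            iteratedDeriv k (ML β₁ ν) (μ * ((x ^ β₁ : ℝ) : ℂ)))) x
      = Gfun β₁ ν μ (k - j) ((j : ℝ) * β₂) x := by
    intro j
    induction j with
    | zero =>
      intro _ x hx
      simpa using fk_eq_Gfun μ hβ1 hν k hx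
    | succ j IH =>
      intro hjk x hx
      have hjk' : j ≤ k := by omega
      rw [Function.iterate_succ_apply']
      show frInt (β₂ - β₁) _ x - μ * frInt β₂ _ x = _
      rw [frInt_congr hx (fun y hy => IH hjk' y hy),
        frInt_congr hx (fun y hy => IH hjk' y hy)]
      have hδ : (0:ℝ) < ν + (j : ℝ) * β₂ := by positivity
      rw [frInt_Gfun μ hβ1 hδ hβd hx, frInt_Gfun μ hβ1 hδ hβ2 hx]
      have hkj : k - j = (k - (j+1)) + 1 := by omega
      rw [hkj]
      have hstep := Gfun_step (β₁ := β₁) (ν := ν) (μ := μ) (k := k - (j+1)) (δ' := (j:ℝ) * β₂ + (β₂ - β₁))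
        (δ'' := (j:ℝ) * β₂ + β₂) (t := x) hβ1 hx
        (by positivity) (by ring)
      rw [hstep]
      congr 1
      push_cast
      ring
  rcases Nat.eq_zero_or_pos k with rfl | hk
  · -- k = 0
    rw [Function.iterate_zero_apply, frInt']
    rw [if_pos (by norm_num)]
    simp
    rfl
  · have h1 := key k le_rfl t ht
    rw [h1, Nat.sub_self]
    rw [frInt', if_neg (by positivity : ((k:ℝ) * β₂) ≠ 0)]
    rw [frInt_congr ht hf₀G, frInt_Gfun μ hβ1 (by linarith : (0:ℝ) < ν + 0)
      (by positivity : (0:ℝ) < (k:ℝ) * β₂) ht, zero_add]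
end

section
/- Let β₁, β₂ > 0, ν > 0, μ₁, μ₂ ∈ ℂ. The convolution u(t) = ∫_0^t τ^{ν-1}E_{β₁,ν}(μ₁τ^{β₁}) · (t−τ)^{β₂−1} E_{β₂,β₂}(μ₂(t−τ)^{β₂}) dτ satisfies (I − μ₂ J^{β₂}) u = J^{β₂}[t^{ν−1}E_{β₁,ν}(μ₁ t^{β₁})]. -/
set_option maxHeartbeats 1000000


open MeasureTheory Filter Set

lemma summable_rpow_div_gamma {β : ℝ} (hβ : 0 < β) {ν : ℝ} (hν : 0 < ν) {r : ℝ} (hr : 0 ≤ r) :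
    Summable (fun n : ℕ => r ^ n / Real.Gamma (β * n + ν)) := by
  set f : ℕ → ℝ := fun n => r ^ n / Real.Gamma (β * n + ν) with hf
  have hpos : ∀ n : ℕ, (0:ℝ) < β * n + ν := fun n =>
    add_pos_of_nonneg_of_pos (mul_nonneg hβ.le (Nat.cast_nonneg n)) hν
  have hf0 : ∀ n, 0 ≤ f n := fun n =>
    div_nonneg (pow_nonneg hr n) (Real.Gamma_pos_of_pos (hpos n)).le
  obtain ⟨k, hk0, hkβ⟩ : ∃ k : ℕ, 0 < k ∧ 1 ≤ (k:ℝ) * β := by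
    refine ⟨max 1 ⌈1/β⌉₊, lt_of_lt_of_le one_pos (le_max_left _ _), ?_⟩
    have h1 : (1:ℝ)/β ≤ ⌈1/β⌉₊ := Nat.le_ceil _
    have h2 : ((⌈1/β⌉₊ : ℕ):ℝ) ≤ ((max 1 ⌈1/β⌉₊ : ℕ):ℝ) := by
      exact_mod_cast le_max_right 1 _
    have := (div_le_iff₀ hβ).mp (h1.trans h2)
    linarith
  obtain ⟨N, hN⟩ : ∃ N : ℕ, max 2 (2 * r ^ k) ≤ β * N + ν := by
    obtain ⟨N, hN⟩ := exists_nat_ge (max 2 (2 * r ^ k) / β)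
    exact ⟨N, by nlinarith [(div_le_iff₀ hβ).mp hN]⟩
  have key : ∀ n, N ≤ n → f (n + k) ≤ (1/2) * f n := by
    intro n hn
    set x : ℝ := β * n + ν with hx
    have hxN : β * N + ν ≤ x := by
      have : (N:ℝ) ≤ n := by exact_mod_cast hn
      nlinarith
    have hx2 : 2 ≤ x := le_trans (le_trans (le_max_left _ _) hN) hxN
    have hxr : 2 * r ^ k ≤ x := le_trans (le_trans (le_max_right _ _) hN) hxN
    have hΓx : 0 < Real.Gamma x := Real.Gamma_pos_of_pos (by linarith)
    have hidx : β * ((n + k : ℕ):ℝ) + ν = x + (k:ℝ) * β := by push_cast; ring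
    have hmono : x * Real.Gamma x ≤ Real.Gamma (β * ((n+k):ℕ) + ν) := by
      rw [hidx, ← Real.Gamma_add_one (by linarith : x ≠ 0)]
      rcases eq_or_lt_of_le hkβ with h | h
      · rw [← h]
      · exact le_of_lt (Real.Gamma_strictMonoOn_Ici (mem_Ici.mpr (by linarith))
          (mem_Ici.mpr (by linarith)) (by linarith))
    have hΓbig : 0 < Real.Gamma (β * ((n+k):ℕ) + ν) := Real.Gamma_pos_of_pos (hpos _)
    have h1 : f (n + k) ≤ r ^ n * r ^ k / (x * Real.Gamma x) := by
      simp only [hf, pow_add]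
      exact div_le_div_of_nonneg_left (by positivity) (by positivity) hmono
    calc f (n+k) ≤ r ^ n * r ^ k / (x * Real.Gamma x) := h1
      _ = (r ^ n / Real.Gamma x) * (r ^ k / x) := by
          rw [div_mul_div_comm, mul_comm (Real.Gamma x) x]
      _ ≤ (r ^ n / Real.Gamma x) * (1/2) := by
          apply mul_le_mul_of_nonneg_left _ (by positivity)
          rw [div_le_iff₀ (by linarith : (0:ℝ) < x)]
          linarith
      _ = (1/2) * f n := by rw [hf]; ring
  have iter : ∀ j q : ℕ, f (N + j + q*k) ≤ (1/2)^q * f (N + j) := by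
    intro j q
    induction q with
    | zero => simp
    | succ q ih =>
      have he : N + j + (q+1)*k = (N + j + q*k) + k := by ring
      rw [he]
      calc f ((N + j + q*k) + k) ≤ (1/2) * f (N + j + q*k) := key _ (by omega)
        _ ≤ (1/2) * ((1/2)^q * f (N+j)) := by
            apply mul_le_mul_of_nonneg_left ih (by norm_num)
        _ = (1/2)^(q+1) * f (N+j) := by ring
  haveI : NeZero k := ⟨hk0.ne'⟩
  have hS : Summable (fun p : ℕ × Fin k => f (N + (p.1 * k + (p.2:ℕ)))) := by
    have hmaj : Summable (fun p : ℕ × Fin k => (1/2:ℝ)^p.1 * f (N + p.2)) := by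
      exact Summable.mul_of_nonneg (f := fun q : ℕ => (1/2:ℝ)^q)
        (g := fun j : Fin k => f (N + j))
        (summable_geometric_of_lt_one (by norm_num) (by norm_num)) (.of_finite)
        (fun q => by positivity) (fun j => hf0 _)
    apply Summable.of_nonneg_of_le (fun p => hf0 _) _ hmaj
    intro p
    have e1 : N + (p.1 * k + (p.2:ℕ)) = N + (p.2:ℕ) + p.1 * k := by omega
    rw [e1]; exact iter _ _
  have htail : Summable (fun m : ℕ => f (N + m)) := by
    refine (Equiv.summable_iff (Nat.divModEquiv k).symm).mp (hS.congr fun p => ?_)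
    simp [Function.comp, Nat.divModEquiv_symm_apply]
  exact (summable_nat_add_iff N).mp (by simpa [add_comm] using htail)


noncomputable def rBeta (a b : ℝ) : ℝ := ∫ x in (0:ℝ)..1, x^(a-1) * (1-x)^(b-1)

lemma rBeta_II {a b : ℝ} (ha : 0 < a) (hb : 0 < b) :
    IntervalIntegrable (fun x : ℝ => x^(a-1) * (1-x)^(b-1)) volume 0 1 := by
  have hc := Complex.betaIntegral_convergent (u := (a:ℂ)) (v := (b:ℂ))
    (by simpa using ha) (by simpa using hb)
  rw [intervalIntegrable_iff_integrableOn_Ioc_of_le zero_le_one] at hc ⊢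
  have heq : EqOn (fun x : ℝ => ‖(x:ℂ)^((a:ℂ)-1) * (1-(x:ℂ))^((b:ℂ)-1)‖)
      (fun x : ℝ => x^(a-1) * (1-x)^(b-1)) (Ioc 0 1) := by
    intro x hx
    have hx0 : (0:ℝ) ≤ x := hx.1.le
    have hx1 : (0:ℝ) ≤ 1 - x := by linarith [hx.2]
    simp only
    rw [show ((a:ℂ)-1) = ((a-1:ℝ):ℂ) by push_cast; ring,
      show ((b:ℂ)-1) = ((b-1:ℝ):ℂ) by push_cast; ring,
      show (1-(x:ℂ)) = ((1-x:ℝ):ℂ) by push_cast; ring,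
      ← Complex.ofReal_cpow hx0, ← Complex.ofReal_cpow hx1, ← Complex.ofReal_mul,
      Complex.norm_real, Real.norm_eq_abs, abs_of_nonneg (by positivity)]
  exact IntegrableOn.congr_fun hc.norm heq measurableSet_Ioc

lemma betaIntegral_eq_rBeta {a b : ℝ} (ha : 0 < a) (hb : 0 < b) :
    Complex.betaIntegral a b = (rBeta a b : ℂ) := by
  rw [Complex.betaIntegral, rBeta, ← intervalIntegral.integral_ofReal]
  apply intervalIntegral.integral_congr
  intro x hx
  rw [uIcc_of_le zero_le_one] at hx
  have hx0 : (0:ℝ) ≤ x := hx.1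
  have hx1 : (0:ℝ) ≤ 1 - x := by linarith [hx.2]
  simp only
  rw [Complex.ofReal_mul, ← Complex.ofReal_one, ← Complex.ofReal_sub,
    Complex.ofReal_cpow hx0, Complex.ofReal_cpow hx1]
  push_cast
  ring

lemma Gamma_eq_rBeta {a b : ℝ} (ha : 0 < a) (hb : 0 < b) :
    Real.Gamma a * Real.Gamma b = Real.Gamma (a+b) * rBeta a b := by
  have h := Complex.Gamma_mul_Gamma_eq_betaIntegral (s := (a:ℂ)) (t := (b:ℂ))
    (by simpa using ha) (by simpa using hb)
  rw [Complex.Gamma_ofReal, Complex.Gamma_ofReal, betaIntegral_eq_rBeta ha hb,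
    show ((a:ℂ)+b) = ((a+b:ℝ):ℂ) by push_cast; ring, Complex.Gamma_ofReal] at h
  exact_mod_cast h

lemma rBeta_pos {a b : ℝ} (ha : 0 < a) (hb : 0 < b) : 0 < rBeta a b := by
  have h := Gamma_eq_rBeta ha hb
  have h1 := Real.Gamma_pos_of_pos ha
  have h2 := Real.Gamma_pos_of_pos hb
  have h3 := Real.Gamma_pos_of_pos (by linarith : 0 < a + b)
  nlinarith [mul_pos h1 h2]

lemma rBeta_antitone {a b c d : ℝ} (hc : 0 < c) (hd : 0 < d) (hca : c ≤ a) (hdb : d ≤ b) :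
    rBeta a b ≤ rBeta c d := by
  have ha : 0 < a := lt_of_lt_of_le hc hca
  have hb : 0 < b := lt_of_lt_of_le hd hdb
  unfold rBeta
  rw [intervalIntegral.integral_of_le zero_le_one, intervalIntegral.integral_of_le zero_le_one]
  calc (∫ x in Ioc (0:ℝ) 1, x^(a-1)*(1-x)^(b-1))
      = ∫ x in Ioo (0:ℝ) 1, x^(a-1)*(1-x)^(b-1) := (setIntegral_congr_set Ioo_ae_eq_Ioc).symm
    _ ≤ ∫ x in Ioo (0:ℝ) 1, x^(c-1)*(1-x)^(d-1) := by
        apply setIntegral_mono_on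
          ((rBeta_II ha hb).1.mono_set Ioo_subset_Ioc_self)
          ((rBeta_II hc hd).1.mono_set Ioo_subset_Ioc_self)
          measurableSet_Ioo
        intro x hx
        have h1x : 0 < 1 - x := by linarith [hx.2]
        apply mul_le_mul
        · exact Real.rpow_le_rpow_of_exponent_ge hx.1 hx.2.le (by linarith)
        · exact Real.rpow_le_rpow_of_exponent_ge h1x (by linarith [hx.1]) (by linarith)
        · exact Real.rpow_nonneg h1x.le _
        · exact Real.rpow_nonneg hx.1.le _
    _ = ∫ x in Ioc (0:ℝ) 1, x^(c-1)*(1-x)^(d-1) := setIntegral_congr_set Ioo_ae_eq_Ioc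

lemma conv_integrableOn {a b t : ℝ} (ha : 0 < a) (hb : 0 < b) (ht : 0 < t) :
    IntegrableOn (fun τ : ℝ => τ^(a-1) * (t-τ)^(b-1)) (Ioo 0 t) := by
  have h2 := (rBeta_II ha hb).comp_mul_right (c := t⁻¹)
  rw [zero_div, one_div, inv_inv] at h2
  rw [intervalIntegrable_iff_integrableOn_Ioc_of_le ht.le] at h2
  have h3 : IntegrableOn (fun x : ℝ => (t^(a-1)*t^(b-1)) * ((x*t⁻¹)^(a-1) * (1-x*t⁻¹)^(b-1)))
      (Ioo 0 t) := (h2.mono_set Ioo_subset_Ioc_self).const_mul _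
  apply h3.congr_fun _ measurableSet_Ioo
  intro x hx
  have hx0 : (0:ℝ) ≤ x := hx.1.le
  have hx1 : (0:ℝ) ≤ t - x := by linarith [hx.2]
  have e1 : x * t⁻¹ = x / t := by ring
  have e2 : 1 - x / t = (t - x) / t := by field_simp
  have hta : (0:ℝ) < t ^ (a-1) := Real.rpow_pos_of_pos ht _
  have htb : (0:ℝ) < t ^ (b-1) := Real.rpow_pos_of_pos ht _
  simp only [e1, e2, Real.div_rpow hx0 ht.le, Real.div_rpow hx1 ht.le]
  field_simp

lemma conv_real_eq {a b t : ℝ} (ha : 0 < a) (hb : 0 < b) (ht : 0 < t) :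
    ∫ τ in Ioo (0:ℝ) t, τ^(a-1) * (t-τ)^(b-1) = t^(a+b-1) * rBeta a b := by
  have h := Complex.betaIntegral_scaled (a:ℂ) (b:ℂ) ht
  have hL : (∫ x:ℝ in (0)..t, (x:ℂ)^((a:ℂ)-1) * ((t:ℂ)-x)^((b:ℂ)-1))
      = ((∫ τ in (0:ℝ)..t, τ^(a-1) * (t-τ)^(b-1) : ℝ) : ℂ) := by
    rw [← intervalIntegral.integral_ofReal]
    apply intervalIntegral.integral_congr
    intro x hx
    rw [uIcc_of_le ht.le] at hx
    have hx0 : (0:ℝ) ≤ x := hx.1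
    have hx1 : (0:ℝ) ≤ t - x := by linarith [hx.2]
    simp only
    rw [Complex.ofReal_mul, Complex.ofReal_cpow hx0, Complex.ofReal_cpow hx1]
    push_cast
    ring
  have hcast : ((a+b-1:ℝ):ℂ) = (a:ℂ)+(b:ℂ)-1 := by push_cast; ring
  rw [hL, betaIntegral_eq_rBeta ha hb] at h
  have hR : ((t:ℂ))^((a:ℂ)+(b:ℂ)-1) = ((t^(a+b-1) : ℝ) : ℂ) := by
    rw [Complex.ofReal_cpow ht.le, hcast]
  rw [hR, ← Complex.ofReal_mul] at h
  have h' := Complex.ofReal_injective h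
  rw [intervalIntegral.integral_of_le ht.le] at h'
  rw [← setIntegral_congr_set Ioo_ae_eq_Ioc] at h'
  exact h'


lemma rpow_mul_nat {s β : ℝ} (hs : 0 < s) (m : ℕ) : s ^ (β*(m:ℝ)) = (s^β)^m := by
  rw [Real.rpow_mul hs.le, Real.rpow_natCast]

lemma rpow_split {s β ν' : ℝ} (hs : 0 < s) (m : ℕ) :
    s ^ (β*(m:ℝ)+ν'-1) = s ^ (β*(m:ℝ)) * s^(ν'-1) := by
  rw [← Real.rpow_add hs]; congr 1; ring

lemma ML_expand {β ν' : ℝ} (hν : 0 < ν') (μ : ℂ) {s : ℝ} (hs : 0 < s) :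
    (↑(s^(ν'-1)) : ℂ) * ML β ν' (μ * ↑(s^β)) =
      ∑' m : ℕ, μ^m * ↑(s^(β*m+ν'-1)) / ↑(Real.Gamma (β*m+ν')) := by
  rw [ML, ← tsum_mul_left]
  apply tsum_congr
  intro m
  rw [Complex.Gamma_ofReal, rpow_split hs m, rpow_mul_nat hs m, Complex.ofReal_mul,
    Complex.ofReal_pow, mul_pow]
  ring

lemma summable_norm_ML {β ν' : ℝ} (hβ : 0 < β) (hν : 0 < ν') {r : ℝ} (hr : 0 ≤ r)
    {s : ℝ} (hs : 0 < s) :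
    Summable (fun m : ℕ => r^m * s^(β*m+ν'-1) / Real.Gamma (β*m+ν')) := by
  have h := (summable_rpow_div_gamma hβ hν (r := r * s^β) (by positivity)).mul_left (s^(ν'-1))
  apply h.congr
  intro m
  rw [mul_pow, rpow_split hs m, rpow_mul_nat hs m]
  field_simp

lemma summable_double {β₁ β₂ c d : ℝ} (hβ1 : 0 < β₁) (hβ2 : 0 < β₂) (hc : 0 < c) (hd : 0 < d)
    {r s : ℝ} (hr : 0 ≤ r) (hs : 0 ≤ s) {t : ℝ} (ht : 0 < t) :
    Summable (fun z : ℕ×ℕ =>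
      r^z.1 * s^z.2 * t^((β₁*z.1+c)+(β₂*z.2+d)-1) / Real.Gamma ((β₁*z.1+c)+(β₂*z.2+d))) := by
  have hA : ∀ m : ℕ, (0:ℝ) < β₁*m+c := fun m => by positivity
  have hB : ∀ n : ℕ, (0:ℝ) < β₂*n+d := fun n => by positivity
  have h1 : Summable (fun m : ℕ => rBeta c d * (r^m * t^(β₁*m+c-1) / Real.Gamma (β₁*m+c))) :=
    (summable_norm_ML hβ1 hc hr ht).mul_left _
  have h2 : Summable (fun n : ℕ => t * (s^n * t^(β₂*n+d-1) / Real.Gamma (β₂*n+d))) :=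
    (summable_norm_ML hβ2 hd hs ht).mul_left _
  have hmaj := Summable.mul_of_nonneg h1 h2
    (fun m => mul_nonneg (rBeta_pos hc hd).le
      (div_nonneg (by positivity) (Real.Gamma_pos_of_pos (hA m)).le))
    (fun n => mul_nonneg ht.le
      (div_nonneg (by positivity) (Real.Gamma_pos_of_pos (hB n)).le))
  apply Summable.of_nonneg_of_le _ _ hmaj
  · intro z
    exact div_nonneg (by positivity)
      (Real.Gamma_pos_of_pos (by positivity : (0:ℝ) < (β₁*z.1+c)+(β₂*z.2+d))).le
  · rintro ⟨m, n⟩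
    simp only
    have hΓA := Real.Gamma_pos_of_pos (hA m)
    have hΓB := Real.Gamma_pos_of_pos (hB n)
    have hrb := rBeta_pos (hA m) (hB n)
    have hbb : rBeta (β₁*m+c) (β₂*n+d) ≤ rBeta c d :=
      rBeta_antitone hc hd (by nlinarith [mul_nonneg hβ1.le (Nat.cast_nonneg m)])
        (by nlinarith [mul_nonneg hβ2.le (Nat.cast_nonneg n)])
    have hΓeq : Real.Gamma ((β₁*m+c)+(β₂*n+d)) =
        Real.Gamma (β₁*m+c) * Real.Gamma (β₂*n+d) / rBeta (β₁*m+c) (β₂*n+d) := by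
      have h := Gamma_eq_rBeta (hA m) (hB n)
      field_simp
      linarith [h]
    have hts : t^((β₁*m+c)+(β₂*n+d)-1) = t^(β₁*m+c-1) * (t * t^(β₂*n+d-1)) := by
      have e : (β₁*(m:ℝ)+c)+(β₂*(n:ℝ)+d)-1 = (β₁*m+c-1) + (1 + (β₂*n+d-1)) := by ring
      rw [e, Real.rpow_add ht, Real.rpow_add ht, Real.rpow_one]
    calc r^m * s^n * t^((β₁*(m:ℝ)+c)+(β₂*(n:ℝ)+d)-1) / Real.Gamma ((β₁*m+c)+(β₂*n+d))
        = (r^m * t^(β₁*(m:ℝ)+c-1) / Real.Gamma (β₁*m+c))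
            * (t * (s^n * t^(β₂*(n:ℝ)+d-1) / Real.Gamma (β₂*n+d)))
            * rBeta (β₁*m+c) (β₂*n+d) := by
          rw [hΓeq, hts]
          field_simp [hΓA.ne', hΓB.ne', hrb.ne']
      _ ≤ (r^m * t^(β₁*(m:ℝ)+c-1) / Real.Gamma (β₁*m+c))
            * (t * (s^n * t^(β₂*(n:ℝ)+d-1) / Real.Gamma (β₂*n+d)))
            * rBeta c d := by
          apply mul_le_mul_of_nonneg_left hbb
          apply mul_nonneg
          · exact div_nonneg (by positivity) hΓA.le
          · exact mul_nonneg ht.le (div_nonneg (by positivity) hΓB.le)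
      _ = rBeta c d * (r^m * t^(β₁*(m:ℝ)+c-1) / Real.Gamma (β₁*m+c))
            * (t * (s^n * t^(β₂*(n:ℝ)+d-1) / Real.Gamma (β₂*n+d))) := by ring

lemma key_int {p q t : ℝ} (hp : 0 < p) (hq : 0 < q) (ht : 0 < t) (c : ℂ) :
    ∫ τ in Ioo (0:ℝ) t, (c / (↑(Real.Gamma p) * ↑(Real.Gamma q))) * ↑(τ^(p-1) * (t-τ)^(q-1))
      = c * ↑(t^(p+q-1)) / ↑(Real.Gamma (p+q)) := by
  rw [MeasureTheory.integral_const_mul,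
    show (∫ τ in Ioo (0:ℝ) t, (↑(τ^(p-1) * (t-τ)^(q-1)) : ℂ))
      = ((∫ τ in Ioo (0:ℝ) t, τ^(p-1)*(t-τ)^(q-1) : ℝ) : ℂ) from integral_ofReal,
    conv_real_eq hp hq ht]
  have hΓp := Real.Gamma_pos_of_pos hp
  have hΓq := Real.Gamma_pos_of_pos hq
  have hΓpq := Real.Gamma_pos_of_pos (by linarith : 0 < p + q)
  have hrb := rBeta_pos hp hq
  have hG : (Real.Gamma p : ℂ) * (Real.Gamma q : ℂ)
      = ↑(Real.Gamma (p+q)) * ↑(rBeta p q) := by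
    rw [← Complex.ofReal_mul, ← Complex.ofReal_mul, Gamma_eq_rBeta hp hq]
  have h1 : ((Real.Gamma p : ℝ) : ℂ) ≠ 0 := by exact_mod_cast hΓp.ne'
  have h2 : ((Real.Gamma q : ℝ) : ℂ) ≠ 0 := by exact_mod_cast hΓq.ne'
  have h3 : ((Real.Gamma (p+q) : ℝ) : ℂ) ≠ 0 := by exact_mod_cast hΓpq.ne'
  have h4 : ((rBeta p q : ℝ) : ℂ) ≠ 0 := by exact_mod_cast hrb.ne'
  rw [Complex.ofReal_mul]
  field_simp
  rw [mul_assoc c (Real.Gamma p : ℂ), hG]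
  ring

lemma key_norm {p q t : ℝ} (hp : 0 < p) (hq : 0 < q) (ht : 0 < t) (c : ℂ) :
    ∫ τ in Ioo (0:ℝ) t, ‖(c / (↑(Real.Gamma p) * ↑(Real.Gamma q))) * ↑(τ^(p-1) * (t-τ)^(q-1))‖
      = ‖c‖ * t^(p+q-1) / Real.Gamma (p+q) := by
  have hΓp := Real.Gamma_pos_of_pos hp
  have hΓq := Real.Gamma_pos_of_pos hq
  have hΓpq := Real.Gamma_pos_of_pos (by linarith : 0 < p + q)
  have hrb := rBeta_pos hp hq
  rw [setIntegral_congr_fun measurableSet_Ioo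
    (g := fun τ : ℝ => (‖c‖ / (Real.Gamma p * Real.Gamma q)) * (τ^(p-1) * (t-τ)^(q-1)))]
  · rw [MeasureTheory.integral_const_mul, conv_real_eq hp hq ht]
    have hG := Gamma_eq_rBeta hp hq
    field_simp
    rw [mul_assoc ‖c‖ (Real.Gamma p), hG]
    ring
  · intro τ hτ
    dsimp only
    have h1 : (0:ℝ) ≤ τ^(p-1) * (t-τ)^(q-1) :=
      mul_nonneg (Real.rpow_nonneg hτ.1.le _) (Real.rpow_nonneg (by linarith [hτ.2]) _)
    rw [norm_mul, norm_div, Complex.norm_real, ← Complex.ofReal_mul, Complex.norm_real,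
      Real.norm_eq_abs, Real.norm_eq_abs, abs_of_nonneg h1,
      abs_of_nonneg (by positivity : (0:ℝ) ≤ Real.Gamma p * Real.Gamma q)]

lemma J_eval {b t : ℝ} (hb : 0 < b) (ht : 0 < t) {ι : Type} [Countable ι]
    (c : ι → ℂ) (E : ι → ℝ) (hE : ∀ i, 0 < E i) {f : ℝ → ℂ}
    (hfun : ∀ x ∈ Ioo (0:ℝ) t, f x = ∑' i, c i * ↑(x^(E i - 1)) / ↑(Real.Gamma (E i)))
    (hsum : Summable fun i => ‖c i‖ * t^(E i + b - 1) / Real.Gamma (E i + b)) :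
    ∫ x in (0:ℝ)..t, (((t - x)^(b-1) : ℝ) : ℂ) * f x
      = ↑(Real.Gamma b) * ∑' i, c i * ↑(t^(E i + b - 1)) / ↑(Real.Gamma (E i + b)) := by
  have hΓb := Real.Gamma_pos_of_pos hb
  have hΓbC : ((Real.Gamma b : ℝ):ℂ) ≠ 0 := by exact_mod_cast hΓb.ne'
  set T : ι → ℝ → ℂ := fun i x =>
    ((c i * ↑(Real.Gamma b)) / (↑(Real.Gamma (E i)) * ↑(Real.Gamma b)))
      * ↑(x^(E i - 1) * (t-x)^(b-1)) with hT
  have hTint : ∀ i, Integrable (T i) (volume.restrict (Ioo 0 t)) := fun i =>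
    ((conv_integrableOn (hE i) hb ht).ofReal.const_mul _)
  have hTnorm : Summable (fun i => ∫ x in Ioo (0:ℝ) t, ‖T i x‖) := by
    apply (hsum.mul_left (Real.Gamma b)).congr
    intro i
    rw [hT]
    dsimp only
    rw [key_norm (hE i) hb ht, norm_mul, Complex.norm_real, Real.norm_eq_abs, abs_of_pos hΓb]
    ring
  calc ∫ x in (0:ℝ)..t, (((t - x)^(b-1) : ℝ) : ℂ) * f x
      = ∫ x in Ioo (0:ℝ) t, (((t - x)^(b-1) : ℝ) : ℂ) * f x := by
        rw [intervalIntegral.integral_of_le ht.le, ← setIntegral_congr_set Ioo_ae_eq_Ioc]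
    _ = ∫ x in Ioo (0:ℝ) t, ∑' i, T i x := by
        apply setIntegral_congr_fun measurableSet_Ioo
        intro x hx
        dsimp only
        rw [hfun x hx, ← tsum_mul_left]
        apply tsum_congr
        intro i
        have hΓE : ((Real.Gamma (E i) : ℝ):ℂ) ≠ 0 := by
          exact_mod_cast (Real.Gamma_pos_of_pos (hE i)).ne'
        rw [hT]
        dsimp only
        rw [Complex.ofReal_mul]
        field_simp
    _ = ∑' i, ∫ x in Ioo (0:ℝ) t, T i x :=
        (integral_tsum_of_summable_integral_norm hTint hTnorm).symm
    _ = ∑' i, ↑(Real.Gamma b) * (c i * ↑(t^(E i + b - 1)) / ↑(Real.Gamma (E i + b))) := by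
        apply tsum_congr
        intro i
        rw [hT]
        dsimp only
        rw [key_int (hE i) hb ht]
        ring
    _ = ↑(Real.Gamma b) * ∑' i, c i * ↑(t^(E i + b - 1)) / ↑(Real.Gamma (E i + b)) :=
        tsum_mul_left



lemma norm_ml_term (μ : ℂ) (m : ℕ) {y q : ℝ} (hy : 0 ≤ y) (hq : 0 < q) :
    ‖μ^m * ((y : ℝ) : ℂ) / ↑(Real.Gamma q)‖ = ‖μ‖^m * y / Real.Gamma q := by
  rw [norm_div, norm_mul, norm_pow, Complex.norm_real, Complex.norm_real, Real.norm_eq_abs,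
    Real.norm_eq_abs, abs_of_nonneg hy, abs_of_pos (Real.Gamma_pos_of_pos hq)]

lemma conv_ML_eval {β₁ β₂ ν : ℝ} (hβ1 : 0 < β₁) (hβ2 : 0 < β₂) (hν : 0 < ν) (μ₁ μ₂ : ℂ)
    {x : ℝ} (hx : 0 < x) :
    (∫ τ in (0:ℝ)..x, ((↑(τ^(ν-1)) : ℂ) * ML β₁ ν (μ₁ * ↑(τ^β₁))) *
        ((↑((x-τ)^(β₂-1)) : ℂ) * ML β₂ β₂ (μ₂ * ↑((x-τ)^β₂))))
      = ∑' z : ℕ×ℕ, (μ₁^z.1 * μ₂^z.2) * ↑(x^((β₁*z.1+ν)+(β₂*z.2+β₂)-1))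
          / ↑(Real.Gamma ((β₁*z.1+ν)+(β₂*z.2+β₂))) := by
  have hA : ∀ m : ℕ, (0:ℝ) < β₁*m+ν := fun m => by positivity
  have hB : ∀ n : ℕ, (0:ℝ) < β₂*n+β₂ := fun n => by positivity
  set T : ℕ×ℕ → ℝ → ℂ := fun z τ =>
    ((μ₁^z.1 * μ₂^z.2) / (↑(Real.Gamma (β₁*z.1+ν)) * ↑(Real.Gamma (β₂*z.2+β₂))))
      * ↑(τ^(β₁*z.1+ν-1) * (x-τ)^(β₂*z.2+β₂-1)) with hT
  have hTint : ∀ z, Integrable (T z) (volume.restrict (Ioo 0 x)) := fun z =>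
    ((conv_integrableOn (hA z.1) (hB z.2) hx).ofReal.const_mul _)
  have hTnorm : Summable (fun z => ∫ τ in Ioo (0:ℝ) x, ‖T z τ‖) := by
    apply (summable_double hβ1 hβ2 hν hβ2 (norm_nonneg μ₁) (norm_nonneg μ₂) hx).congr
    intro z
    rw [hT]
    dsimp only
    rw [key_norm (hA z.1) (hB z.2) hx, norm_mul, norm_pow, norm_pow]
  calc (∫ τ in (0:ℝ)..x, ((↑(τ^(ν-1)) : ℂ) * ML β₁ ν (μ₁ * ↑(τ^β₁))) *
        ((↑((x-τ)^(β₂-1)) : ℂ) * ML β₂ β₂ (μ₂ * ↑((x-τ)^β₂))))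
      = ∫ τ in Ioo (0:ℝ) x, ((↑(τ^(ν-1)) : ℂ) * ML β₁ ν (μ₁ * ↑(τ^β₁))) *
        ((↑((x-τ)^(β₂-1)) : ℂ) * ML β₂ β₂ (μ₂ * ↑((x-τ)^β₂))) := by
        rw [intervalIntegral.integral_of_le hx.le, ← setIntegral_congr_set Ioo_ae_eq_Ioc]
    _ = ∫ τ in Ioo (0:ℝ) x, ∑' z, T z τ := by
        apply setIntegral_congr_fun measurableSet_Ioo
        intro τ hτ
        dsimp only
        have hτ0 : 0 < τ := hτ.1
        have hxτ : 0 < x - τ := by linarith [hτ.2]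
        have hn1 : Summable (fun m : ℕ =>
            ‖μ₁^m * (↑(τ^(β₁*m+ν-1)) : ℂ) / ↑(Real.Gamma (β₁*m+ν))‖) := by
          apply (summable_norm_ML hβ1 hν (norm_nonneg μ₁) hτ0).congr
          intro m
          exact (norm_ml_term μ₁ m (Real.rpow_nonneg hτ0.le _) (hA m)).symm
        have hn2 : Summable (fun n : ℕ =>
            ‖μ₂^n * (↑((x-τ)^(β₂*n+β₂-1)) : ℂ) / ↑(Real.Gamma (β₂*n+β₂))‖) := by
          apply (summable_norm_ML hβ2 hβ2 (norm_nonneg μ₂) hxτ).congr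
          intro n
          exact (norm_ml_term μ₂ n (Real.rpow_nonneg hxτ.le _) (hB n)).symm
        rw [ML_expand hν μ₁ hτ0, ML_expand hβ2 μ₂ hxτ,
          tsum_mul_tsum_of_summable_norm hn1 hn2]
        apply tsum_congr
        intro z
        have h1 : ((Real.Gamma (β₁*z.1+ν) : ℝ):ℂ) ≠ 0 := by
          exact_mod_cast (Real.Gamma_pos_of_pos (hA z.1)).ne'
        have h2 : ((Real.Gamma (β₂*z.2+β₂) : ℝ):ℂ) ≠ 0 := by
          exact_mod_cast (Real.Gamma_pos_of_pos (hB z.2)).ne'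
        rw [hT]
        dsimp only
        rw [Complex.ofReal_mul]
        field_simp
    _ = ∑' z, ∫ τ in Ioo (0:ℝ) x, T z τ :=
        (integral_tsum_of_summable_integral_norm hTint hTnorm).symm
    _ = ∑' z : ℕ×ℕ, (μ₁^z.1 * μ₂^z.2) * ↑(x^((β₁*z.1+ν)+(β₂*z.2+β₂)-1))
          / ↑(Real.Gamma ((β₁*z.1+ν)+(β₂*z.2+β₂))) := by
        apply tsum_congr
        intro z
        rw [hT]
        dsimp only
        rw [key_int (hA z.1) (hB z.2) hx]


lemma telescope {Q : ℕ×ℕ → ℂ} (hQ : Summable Q) :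
    ∑' z : ℕ×ℕ, Q z - ∑' z : ℕ×ℕ, Q (z.1, z.2+1) = ∑' m : ℕ, Q (m, 0) := by
  have hinj : Function.Injective (fun z : ℕ×ℕ => (z.1, z.2+1) : ℕ×ℕ → ℕ×ℕ) := by
    rintro ⟨a1,a2⟩ ⟨b1,b2⟩ h
    simp only [Prod.mk.injEq] at h
    exact Prod.ext h.1 (by omega)
  have h2 : Summable (fun z : ℕ×ℕ => Q (z.1, z.2+1)) := hQ.comp_injective hinj
  have hg1 : HasSum (fun m => ∑' n, Q (m, n)) (∑' z : ℕ×ℕ, Q z) :=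
    hQ.hasSum.prod_fiberwise (fun m => (hQ.prod_factor m).hasSum)
  have hg2 : HasSum (fun m => ∑' n, Q (m, n+1)) (∑' z : ℕ×ℕ, Q (z.1, z.2+1)) :=
    h2.hasSum.prod_fiberwise (fun m => (h2.prod_factor m).hasSum)
  rw [← hg1.tsum_eq, ← hg2.tsum_eq, ← Summable.tsum_sub hg1.summable hg2.summable]
  apply tsum_congr
  intro m
  rw [Summable.tsum_eq_zero_add (hQ.prod_factor m)]
  ring

theorem lemma_2ii (β₁ β₂ ν : ℝ) (hβ1 : 0 < β₁) (hβ2 : 0 < β₂) (hν : 0 < ν)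
    (μ₁ μ₂ : ℂ) (t : ℝ) (ht : 0 ≤ t) :
    (∫ τ in (0:ℝ)..t,
        (((τ ^ (ν - 1) : ℝ) : ℂ) * ML β₁ ν (μ₁ * ((τ ^ β₁ : ℝ) : ℂ))) *
          ((((t - τ) ^ (β₂ - 1) : ℝ) : ℂ) * ML β₂ β₂ (μ₂ * (((t - τ) ^ β₂ : ℝ) : ℂ)))) -
        μ₂ * frInt β₂
          (fun x : ℝ => ∫ τ in (0:ℝ)..x,
            (((τ ^ (ν - 1) : ℝ) : ℂ) * ML β₁ ν (μ₁ * ((τ ^ β₁ : ℝ) : ℂ))) *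
              ((((x - τ) ^ (β₂ - 1) : ℝ) : ℂ) * ML β₂ β₂ (μ₂ * (((x - τ) ^ β₂ : ℝ) : ℂ)))) t
      = frInt β₂
          (fun x : ℝ => ((x ^ (ν - 1) : ℝ) : ℂ) * ML β₁ ν (μ₁ * ((x ^ β₁ : ℝ) : ℂ))) t := by
  rcases eq_or_lt_of_le ht with rfl | ht'
  · simp [frInt, intervalIntegral.integral_same]
  have hΓb := Real.Gamma_pos_of_pos hβ2
  have hΓbC : ((Real.Gamma β₂ : ℝ):ℂ) ≠ 0 := by exact_mod_cast hΓb.ne'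
  set E : ℕ×ℕ → ℝ := fun z => (β₁*z.1+ν)+(β₂*z.2+β₂) with hE
  have hEpos : ∀ z, 0 < E z := fun z => by
    have : (0:ℝ) ≤ β₁*z.1 := by positivity
    have : (0:ℝ) ≤ β₂*z.2 := by positivity
    simp only [hE]; positivity
  set Q : ℕ×ℕ → ℂ := fun z =>
    (μ₁^z.1 * μ₂^z.2) * ↑(t^(E z - 1)) / ↑(Real.Gamma (E z)) with hQdef
  -- summability of Q
  have hQnorm : Summable (fun z : ℕ×ℕ =>
      ‖μ₁‖^z.1 * ‖μ₂‖^z.2 * t^(E z - 1) / Real.Gamma (E z)) := by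
    have := summable_double hβ1 hβ2 hν hβ2 (norm_nonneg μ₁) (norm_nonneg μ₂) ht'
    exact this
  have hQ : Summable Q := by
    apply Summable.of_norm
    apply hQnorm.congr
    intro z
    rw [hQdef]
    dsimp only
    rw [norm_div, norm_mul, norm_mul, norm_pow, norm_pow, Complex.norm_real, Complex.norm_real,
      Real.norm_eq_abs, Real.norm_eq_abs, abs_of_nonneg (Real.rpow_nonneg ht'.le _),
      abs_of_pos (Real.Gamma_pos_of_pos (hEpos z))]
  -- (1) the convolution at t
  have hS1 : (∫ τ in (0:ℝ)..t,
        (((τ ^ (ν - 1) : ℝ) : ℂ) * ML β₁ ν (μ₁ * ((τ ^ β₁ : ℝ) : ℂ))) *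
          ((((t - τ) ^ (β₂ - 1) : ℝ) : ℂ) * ML β₂ β₂ (μ₂ * (((t - τ) ^ β₂ : ℝ) : ℂ))))
      = ∑' z : ℕ×ℕ, Q z := conv_ML_eval hβ1 hβ2 hν μ₁ μ₂ ht'
  -- (2) J of the convolution
  have hS2 : μ₂ * frInt β₂
      (fun x : ℝ => ∫ τ in (0:ℝ)..x,
        (((τ ^ (ν - 1) : ℝ) : ℂ) * ML β₁ ν (μ₁ * ((τ ^ β₁ : ℝ) : ℂ))) *
          ((((x - τ) ^ (β₂ - 1) : ℝ) : ℂ) * ML β₂ β₂ (μ₂ * (((x - τ) ^ β₂ : ℝ) : ℂ)))) t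
      = ∑' z : ℕ×ℕ, Q (z.1, z.2+1) := by
    have hJ := J_eval hβ2 ht' (fun z : ℕ×ℕ => μ₁^z.1 * μ₂^z.2) E hEpos
      (f := fun x : ℝ => ∫ τ in (0:ℝ)..x,
        (((τ ^ (ν - 1) : ℝ) : ℂ) * ML β₁ ν (μ₁ * ((τ ^ β₁ : ℝ) : ℂ))) *
          ((((x - τ) ^ (β₂ - 1) : ℝ) : ℂ) * ML β₂ β₂ (μ₂ * (((x - τ) ^ β₂ : ℝ) : ℂ))))
      (fun x hx => conv_ML_eval hβ1 hβ2 hν μ₁ μ₂ hx.1)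
      ?hsum
    case hsum =>
      apply (summable_double hβ1 hβ2 (show (0:ℝ) < ν+β₂ by linarith) hβ2
        (norm_nonneg μ₁) (norm_nonneg μ₂) ht').congr
      intro z
      rw [norm_mul, norm_pow, norm_pow,
        show β₁*(z.1:ℝ)+(ν+β₂)+(β₂*z.2+β₂) = E z + β₂ from by rw [hE]; ring]
    rw [frInt, hJ, inv_mul_cancel_left₀ hΓbC, ← tsum_mul_left]
    apply tsum_congr
    intro z
    rw [hQdef]
    dsimp only
    rw [show E (z.1, z.2+1) = E z + β₂ from by simp only [hE]; push_cast; ring, pow_succ]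
    ring
  -- (3) J of the Mittag-Leffler power function
  have hS3 : frInt β₂
      (fun x : ℝ => ((x ^ (ν - 1) : ℝ) : ℂ) * ML β₁ ν (μ₁ * ((x ^ β₁ : ℝ) : ℂ))) t
      = ∑' m : ℕ, Q (m, 0) := by
    have hJ := J_eval hβ2 ht' (fun m : ℕ => μ₁^m) (fun m : ℕ => β₁*m+ν)
      (fun m => by positivity)
      (f := fun x : ℝ => ((x ^ (ν - 1) : ℝ) : ℂ) * ML β₁ ν (μ₁ * ((x ^ β₁ : ℝ) : ℂ)))
      (fun x hx => ML_expand hν μ₁ hx.1)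
      ?hsum3
    case hsum3 =>
      apply (summable_norm_ML hβ1 (show (0:ℝ) < ν+β₂ by linarith)
        (norm_nonneg μ₁) ht').congr
      intro m
      rw [norm_pow, show β₁*(m:ℝ)+(ν+β₂) = β₁*m+ν+β₂ from by ring]
    rw [frInt, hJ, inv_mul_cancel_left₀ hΓbC]
    apply tsum_congr
    intro m
    rw [hQdef]
    dsimp only
    rw [show E (m, 0) = β₁*m+ν+β₂ from by simp only [hE]; push_cast; ring, pow_zero, mul_one]
  rw [hS1, hS2, hS3]
  exact telescope hQ
end

section
/- Let Z be an m×m complex matrix and β, ν > 0. For real s > ‖Z‖^{1/β}, the matrix s^β I − Z is invertible and Σ_{n=0}^∞ s^{−β(n+1)} Z^n = (s^β I − Z)^{-1}; consequently the entrywise Laplace transform of t ↦ t^{ν−1} E_{β,ν}(t^β Z) (the matrix Mittag-Leffler function Σ_n t^{βn+ν−1} Z^n/Γ(βn+ν)) equals s^{β−ν}(s^β I − Z)^{-1}. -/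
attribute [local instance] Matrix.linftyOpNormedRing

attribute [local instance] Matrix.linftyOpNormedAlgebra

open MeasureTheory Real Set NNReal

section Helpers

lemma lap_rpow {a s : ℝ} (ha : 0 < a) (hs : 0 < s) :
    ∫ t in Ioi (0:ℝ), Real.exp (-(s * t)) * t ^ (a - 1) = Real.Gamma a * s ^ (-a) := by
  have h := integral_rpow_mul_exp_neg_mul_rpow (p := 1) (q := a - 1) (b := s)
    one_pos (by linarith) hs
  rw [setIntegral_congr_fun measurableSet_Ioi
    (fun x hx => by simp only [Real.rpow_one]; ring_nf :
      EqOn (fun t => Real.exp (-(s * t)) * t ^ (a - 1))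
        (fun x => x ^ (a - 1) * Real.exp (-s * x ^ (1:ℝ))) (Ioi 0))]
  rw [h]
  norm_num [mul_comm]

lemma hInt_rpow {a s : ℝ} (ha : 0 < a) (hs : 0 < s) :
    IntegrableOn (fun t => Real.exp (-(s * t)) * t ^ (a - 1)) (Ioi (0:ℝ)) := by
  refine (integrableOn_rpow_mul_exp_neg_mul_rpow (by linarith : (-1:ℝ) < a - 1)
    (zero_lt_one : (0:ℝ) < 1) hs).congr_fun (fun x hx => ?_) measurableSet_Ioi
  simp only [Real.rpow_one]; ring_nf

lemma Gamma_lb {x A : ℝ} (hx : 1 ≤ x) (hA : 0 < A) :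
    Real.exp (-A) * A ^ (x - 1) ≤ Real.Gamma x := by
  rw [Real.Gamma_eq_integral (by linarith : 0 < x)]
  have h1 : ∫ t in Ioi A, Real.exp (-t) * A ^ (x - 1) = Real.exp (-A) * A ^ (x - 1) := by
    rw [integral_mul_const, integral_exp_neg_Ioi]
  rw [← h1]
  have hint : IntegrableOn (fun t => Real.exp (-t) * t ^ (x - 1)) (Ioi 0) :=
    Real.GammaIntegral_convergent (by linarith)
  refine le_trans (setIntegral_mono_on ?_ (hint.mono_set (Ioi_subset_Ioi hA.le))
    measurableSet_Ioi (fun t ht => ?_)) ?_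
  · exact ((exp_neg_integrableOn_Ioi A one_pos).congr_fun
      (fun t _ => by rw [neg_one_mul]) measurableSet_Ioi).mul_const _
  · exact mul_le_mul_of_nonneg_left
      (rpow_le_rpow hA.le (le_of_lt ht) (by linarith)) (exp_nonneg _)
  · exact setIntegral_mono_set hint
      ((ae_restrict_mem measurableSet_Ioi).mono fun t ht => by
        have : (0:ℝ) < t := ht; positivity)
      ((Ioi_subset_Ioi hA.le).eventuallyLE)

lemma rpow_lin {t β ν : ℝ} (ht : 0 < t) (n : ℕ) :
    t ^ (β * n + ν - 1) = t ^ (ν - 1) * (t ^ β) ^ n := by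
  rw [show β * n + ν - 1 = (ν - 1) + β * n by ring, rpow_add ht, ← rpow_natCast (t ^ β),
    ← rpow_mul ht.le, mul_comm β]

lemma summable_ml {β ν : ℝ} (hβ : 0 < β) (hν : 0 < ν) {r t : ℝ} (hr : 0 ≤ r) (ht : 0 < t) :
    Summable (fun n : ℕ => t ^ (β * n + ν - 1) * r ^ n / Real.Gamma (β * n + ν)) := by
  set A : ℝ := max 1 ((r + 1) ^ (1 / β) * t) with hA
  have hA1 : (1:ℝ) ≤ A := le_max_left _ _
  have hApos : (0:ℝ) < A := lt_of_lt_of_le one_pos hA1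
  have hAβ : t ^ β * r < A ^ β := by
    have h1 : ((r + 1) ^ (1 / β) * t) ^ β ≤ A ^ β :=
      rpow_le_rpow (by positivity) (le_max_right _ _) hβ.le
    have h2 : ((r + 1) ^ (1 / β) * t) ^ β = (r + 1) * t ^ β := by
      rw [mul_rpow (by positivity) ht.le, ← rpow_mul (by positivity),
        one_div_mul_cancel hβ.ne', Real.rpow_one]
    nlinarith [rpow_pos_of_pos ht β]
  set q : ℝ := t ^ β * r / A ^ β with hq
  have hApow : (0:ℝ) < A ^ β := rpow_pos_of_pos hApos β
  have hq0 : 0 ≤ q := by positivity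
  have hq1 : q < 1 := (div_lt_one hApow).2 hAβ
  refine Summable.of_norm_bounded_eventually_nat
    (g := fun n => (t ^ (ν - 1) * Real.exp A * A ^ (1 - ν)) * q ^ n)
    (((summable_geometric_of_lt_one hq0 hq1).mul_left _)) ?_
  filter_upwards [Filter.eventually_ge_atTop ⌈1 / β⌉₊] with n hn
  have hx1 : 1 ≤ β * n + ν := by
    have : (1:ℝ) / β ≤ n := le_trans (Nat.le_ceil _) (by exact_mod_cast hn)
    have := (div_le_iff₀ hβ).1 this
    nlinarith
  have hxpos : 0 < β * n + ν := by linarith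
  have hG : Real.exp (-A) * A ^ (β * n + ν - 1) ≤ Real.Gamma (β * n + ν) := Gamma_lb hx1 hApos
  have hGpos : 0 < Real.Gamma (β * n + ν) := Real.Gamma_pos_of_pos hxpos
  have hL : (0:ℝ) < Real.exp (-A) * A ^ (β * n + ν - 1) := by positivity
  have hfn : 0 ≤ t ^ (β * n + ν - 1) * r ^ n := by positivity
  rw [Real.norm_of_nonneg (by positivity)]
  calc t ^ (β * n + ν - 1) * r ^ n / Real.Gamma (β * n + ν)
      ≤ t ^ (β * n + ν - 1) * r ^ n / (Real.exp (-A) * A ^ (β * n + ν - 1)) :=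
        div_le_div_of_nonneg_left hfn hL hG
    _ = (t ^ (ν - 1) * Real.exp A * A ^ (1 - ν)) * q ^ n := by
        rw [rpow_lin ht, rpow_lin hApos, hq, div_pow, mul_pow, Real.exp_neg]
        rw [show (1:ℝ) - ν = -(ν - 1) by ring, rpow_neg hApos.le]
        field_simp

lemma entry_le {m : ℕ} (M : Matrix (Fin m) (Fin m) ℂ) (i j : Fin m) : ‖M i j‖ ≤ ‖M‖ := by
  rw [Matrix.linfty_opNorm_def]
  calc ‖M i j‖ = ((‖M i j‖₊ : ℝ≥0) : ℝ) := rfl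
    _ ≤ ((∑ k, ‖M i k‖₊ : ℝ≥0) : ℝ) := by
        exact NNReal.coe_le_coe.2 (Finset.single_le_sum
          (f := fun k => ‖M i k‖₊) (fun _ _ => zero_le) (Finset.mem_univ j))
    _ ≤ _ := by
        exact NNReal.coe_le_coe.2 (Finset.le_sup
          (f := fun i => ∑ k, ‖M i k‖₊) (Finset.mem_univ i))

noncomputable def entryCLM (m : ℕ) (i j : Fin m) : Matrix (Fin m) (Fin m) ℂ →L[ℂ] ℂ :=
  LinearMap.mkContinuous
    { toFun := fun M => M i j, map_add' := fun _ _ => rfl, map_smul' := fun _ _ => rfl } 1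
    (fun M => by rw [one_mul]; exact entry_le M i j)

end Helpers

theorem matrix_ML_laplace (m : ℕ) (β ν : ℝ) (hβ : 0 < β) (hν : 0 < ν)
    (Z : Matrix (Fin m) (Fin m) ℂ) (s : ℝ) (hs0 : 0 < s) (hs : ‖Z‖ ^ (1 / β) < s) :
    IsUnit (((s ^ β : ℝ) : ℂ) • (1 : Matrix (Fin m) (Fin m) ℂ) - Z) ∧
      (∑' n : ℕ, (((s ^ (β * ((n : ℝ) + 1)) : ℝ) : ℂ))⁻¹ • Z ^ n)
        = (((s ^ β : ℝ) : ℂ) • (1 : Matrix (Fin m) (Fin m) ℂ) - Z)⁻¹ ∧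
      ∀ i j : Fin m,
        laplace (fun t : ℝ =>
            (∑' n : ℕ,
              (((t ^ (β * n + ν - 1) : ℝ) : ℂ) / Complex.Gamma ((β * n + ν : ℝ) : ℂ)) • Z ^ n)
              i j) s
          = (((s ^ (β - ν) : ℝ) : ℂ) •
              (((s ^ β : ℝ) : ℂ) • (1 : Matrix (Fin m) (Fin m) ℂ) - Z)⁻¹) i j := by
  haveI : CompleteSpace (Matrix (Fin m) (Fin m) ℂ) := FiniteDimensional.complete ℂ _
  have hZ : ‖Z‖ < s ^ β := by
    have h := rpow_lt_rpow (by positivity) hs hβ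
    rwa [← rpow_mul (norm_nonneg _), one_div_mul_cancel hβ.ne', Real.rpow_one] at h
  set a : ℝ := s ^ β with ha
  have hap : 0 < a := rpow_pos_of_pos hs0 β
  have hane : ((a:ℝ):ℂ) ≠ 0 := by exact_mod_cast hap.ne'
  set T : Matrix (Fin m) (Fin m) ℂ := ((a:ℝ):ℂ)⁻¹ • Z with hT
  have hTnorm : ‖T‖ < 1 := by
    rw [hT, norm_smul, norm_inv, Complex.norm_real, Real.norm_of_nonneg hap.le]
    rw [inv_mul_lt_iff₀ hap, mul_one]
    exact hZ
  have hsummT : Summable (fun n : ℕ => T ^ n) := summable_geometric_of_norm_lt_one hTnorm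
  have key : (((a:ℝ):ℂ) • (1 : Matrix (Fin m) (Fin m) ℂ) - Z) = ((a:ℝ):ℂ) • (1 - T) := by
    rw [smul_sub, hT, smul_smul, mul_inv_cancel₀ hane, one_smul]
  have hmul : (((a:ℝ):ℂ) • (1 : Matrix (Fin m) (Fin m) ℂ) - Z) *
      (((a:ℝ):ℂ)⁻¹ • ∑' n : ℕ, T ^ n) = 1 := by
    rw [key, Matrix.smul_mul, Matrix.mul_smul, smul_smul, mul_inv_cancel₀ hane, one_smul]
    exact mul_neg_geom_series T hTnorm
  have hmul' : (((a:ℝ):ℂ)⁻¹ • ∑' n : ℕ, T ^ n) *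
      (((a:ℝ):ℂ) • (1 : Matrix (Fin m) (Fin m) ℂ) - Z) = 1 := by
    rw [key, Matrix.smul_mul, Matrix.mul_smul, smul_smul, inv_mul_cancel₀ hane, one_smul]
    exact geom_series_mul_neg T hTnorm
  have hUnit : IsUnit (((a:ℝ):ℂ) • (1 : Matrix (Fin m) (Fin m) ℂ) - Z) :=
    ⟨⟨_, _, hmul, hmul'⟩, rfl⟩
  have hinv : (((a:ℝ):ℂ) • (1 : Matrix (Fin m) (Fin m) ℂ) - Z)⁻¹
      = ((a:ℝ):ℂ)⁻¹ • ∑' n : ℕ, T ^ n := Matrix.inv_eq_right_inv hmul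
  have hterm : ∀ n : ℕ, (((s ^ (β * ((n : ℝ) + 1)) : ℝ) : ℂ))⁻¹ • Z ^ n
      = ((a:ℝ):ℂ)⁻¹ • T ^ n := by
    intro n
    have h1 : s ^ (β * ((n : ℝ) + 1)) = a ^ (n + 1) := by
      rw [rpow_mul hs0.le, ← rpow_natCast (s ^ β) (n+1)]
      push_cast
      ring_nf
    rw [h1, hT, smul_pow, smul_smul]
    push_cast
    rw [inv_pow, pow_succ, mul_inv, mul_comm]
  have htsum : (∑' n : ℕ, (((s ^ (β * ((n : ℝ) + 1)) : ℝ) : ℂ))⁻¹ • Z ^ n)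
      = (((a:ℝ):ℂ) • (1 : Matrix (Fin m) (Fin m) ℂ) - Z)⁻¹ := by
    rw [hinv, ← (hsummT.hasSum.const_smul (((a:ℝ):ℂ)⁻¹)).tsum_eq]
    exact tsum_congr hterm
  refine ⟨hUnit, htsum, fun i j => ?_⟩
  haveI : Nonempty (Fin m) := ⟨i⟩
  -- notation
  set w : ℕ → ℝ → ℂ := fun n t =>
    ((t ^ (β * n + ν - 1) : ℝ) : ℂ) / Complex.Gamma ((β * n + ν : ℝ) : ℂ) with hw
  have hxpos : ∀ n : ℕ, (0:ℝ) < β * n + ν := fun n => by positivity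
  have hGpos : ∀ n : ℕ, 0 < Real.Gamma (β * n + ν) := fun n => Real.Gamma_pos_of_pos (hxpos n)
  have hwnorm : ∀ (n : ℕ) {t : ℝ}, 0 < t →
      ‖w n t‖ = t ^ (β * n + ν - 1) / Real.Gamma (β * n + ν) := by
    intro n t ht
    rw [hw]
    simp only [Complex.Gamma_ofReal, norm_div, Complex.norm_real]
    rw [Real.norm_of_nonneg (rpow_nonneg ht.le _), Real.norm_of_nonneg (hGpos n).le]
  have hzn : ∀ n : ℕ, ‖(Z ^ n) i j‖ ≤ ‖Z‖ ^ n :=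
    fun n => (entry_le _ i j).trans (norm_pow_le Z n)
  have hsumM : ∀ {t : ℝ}, 0 < t → Summable (fun n : ℕ => w n t • Z ^ n) := by
    intro t ht
    refine Summable.of_norm_bounded (summable_ml hβ hν (norm_nonneg Z) ht) (fun n => ?_)
    rw [norm_smul, hwnorm n ht, div_mul_eq_mul_div, div_le_div_iff_of_pos_right (hGpos n)]
    exact mul_le_mul_of_nonneg_left (norm_pow_le Z n) (by positivity)
  -- the integrand functions
  set G : ℕ → ℝ → ℂ := fun n t => Complex.exp (-(s * t)) * (w n t * (Z ^ n) i j) with hG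
  set h : ℕ → ℝ → ℝ := fun n t => Real.exp (-(s * t)) * t ^ (β * n + ν - 1) with hh
  have hGform : ∀ (n : ℕ) {t : ℝ}, 0 < t →
      G n t = ((h n t : ℝ) : ℂ) * ((Z ^ n) i j / Complex.Gamma ((β * n + ν : ℝ) : ℂ)) := by
    intro n t ht
    simp only [hG, hh, hw]
    have he : ((Real.exp (-(s*t)) : ℝ) : ℂ) = Complex.exp (-((s:ℂ) * (t:ℂ))) := by
      rw [Complex.ofReal_exp]; norm_cast
    rw [← he]
    push_cast
    ring
  have hIntG : ∀ n : ℕ, Integrable (G n) (volume.restrict (Ioi 0)) := by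
    intro n
    have h1 : Integrable (fun t => ((h n t : ℝ) : ℂ) *
        ((Z ^ n) i j / Complex.Gamma ((β * n + ν : ℝ) : ℂ))) (volume.restrict (Ioi 0)) :=
      ((hInt_rpow (hxpos n) hs0).ofReal).mul_const _
    exact h1.congr ((ae_restrict_mem measurableSet_Ioi).mono fun t ht => (hGform n ht).symm)
  have hGnorm : ∀ n : ℕ, ∫ t in Ioi (0:ℝ), ‖G n t‖
      = s ^ (-(β * n + ν)) * ‖(Z ^ n) i j‖ := by
    intro n
    have h1 : ∫ t in Ioi (0:ℝ), ‖G n t‖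
        = ∫ t in Ioi (0:ℝ), h n t * (‖(Z ^ n) i j‖ / Real.Gamma (β * n + ν)) := by
      refine integral_congr_ae (((ae_restrict_mem measurableSet_Ioi)).mono fun t ht => ?_)
      show ‖G n t‖ = h n t * (‖(Z ^ n) i j‖ / Real.Gamma (β * n + ν))
      rw [hGform n ht, norm_mul, Complex.norm_real, Complex.Gamma_ofReal, norm_div,
        Complex.norm_real, Real.norm_of_nonneg (hGpos n).le,
        Real.norm_of_nonneg (by have ht' : (0:ℝ) < t := ht; simp only [hh]; positivity)]
    rw [h1, integral_mul_const, hh, lap_rpow (hxpos n) hs0]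
    field_simp [(hGpos n).ne']
  have hgeo : Summable (fun n : ℕ => s ^ (-ν) * (a⁻¹ * ‖Z‖) ^ n) := by
    refine Summable.mul_left _ (summable_geometric_of_lt_one (by positivity) ?_)
    rw [inv_mul_lt_iff₀ hap, mul_one]; exact hZ
  have hsneg : ∀ n : ℕ, s ^ (-(β * n + ν)) = s ^ (-ν) * (a⁻¹)^ n := by
    intro n
    rw [ha, ← rpow_neg hs0.le, ← rpow_natCast (s ^ (-β)) n, ← rpow_mul hs0.le,
      ← rpow_add hs0]
    congr 1; ring
  have hNormSum : Summable (fun n : ℕ => ∫ t in Ioi (0:ℝ), ‖G n t‖) := by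
    refine hgeo.of_nonneg_of_le (fun n => integral_nonneg fun t => norm_nonneg _) (fun n => ?_)
    rw [hGnorm n, hsneg n, mul_pow, mul_assoc]
    exact mul_le_mul_of_nonneg_left
      (mul_le_mul_of_nonneg_left (hzn n) (by positivity)) (rpow_nonneg hs0.le _)
  -- interchange
  have hlap : laplace (fun t : ℝ => (∑' n : ℕ, w n t • Z ^ n) i j) s
      = ∑' n : ℕ, ∫ t in Ioi (0:ℝ), G n t := by
    rw [laplace, integral_tsum_of_summable_integral_norm hIntG hNormSum]
    refine integral_congr_ae (((ae_restrict_mem measurableSet_Ioi)).mono fun t ht => ?_)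
    show Complex.exp (-((s:ℂ) * (t:ℂ))) * (∑' n : ℕ, w n t • Z ^ n) i j = ∑' n : ℕ, G n t
    have hmap : (∑' n : ℕ, w n t • Z ^ n) i j = ∑' n : ℕ, w n t * (Z ^ n) i j := by
      have := ((entryCLM m i j).map_tsum (hsumM ht))
      have hE : ∀ M, entryCLM m i j M = M i j := fun _ => rfl
      simpa [hE, Matrix.smul_apply, smul_eq_mul] using this
    simp only [hG]
    rw [hmap, ← _root_.tsum_mul_left]
  have hIntGval : ∀ n : ℕ, ∫ t in Ioi (0:ℝ), G n t
      = ((s ^ (-(β * n + ν)) : ℝ) : ℂ) * (Z ^ n) i j := by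
    intro n
    have h1 : ∫ t in Ioi (0:ℝ), G n t = (∫ t in Ioi (0:ℝ), ((h n t : ℝ):ℂ)) *
        ((Z ^ n) i j / Complex.Gamma ((β * n + ν : ℝ) : ℂ)) := by
      rw [← integral_mul_const]
      exact integral_congr_ae (((ae_restrict_mem measurableSet_Ioi)).mono
        fun t ht => hGform n ht)
    have h2 : (∫ t in Ioi (0:ℝ), ((h n t : ℝ):ℂ)) = ((∫ t in Ioi (0:ℝ), h n t : ℝ) : ℂ) :=
      integral_ofReal
    rw [h1, h2]
    simp only [hh]
    rw [lap_rpow (hxpos n) hs0, Complex.Gamma_ofReal]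
    have hGne : ((Real.Gamma (β * n + ν) : ℝ) : ℂ) ≠ 0 := by exact_mod_cast (hGpos n).ne'
    push_cast
    field_simp
  -- final computation
  rw [hlap, tsum_congr hIntGval, hinv, Matrix.smul_apply, Matrix.smul_apply, smul_eq_mul,
    smul_eq_mul]
  have hSentry : (∑' n : ℕ, T ^ n) i j = ∑' n : ℕ, (((a:ℝ):ℂ)⁻¹) ^ n * (Z ^ n) i j := by
    have := ((entryCLM m i j).map_tsum hsummT)
    have hE : ∀ M, entryCLM m i j M = M i j := fun _ => rfl
    simpa [hE, hT, smul_pow, Matrix.smul_apply,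
      smul_eq_mul] using this
  rw [hSentry, ← _root_.tsum_mul_left, ← _root_.tsum_mul_left]
  refine tsum_congr fun n => ?_
  have hainv : (a:ℝ)⁻¹ = s ^ (-β) := by rw [ha, ← rpow_neg hs0.le]
  have hscal : (s ^ (-(β * n + ν)) : ℝ) = s ^ (β - ν) * (a⁻¹ * (a⁻¹) ^ n) := by
    rw [hainv, ← rpow_natCast (s ^ (-β)) n, ← rpow_mul hs0.le, ← rpow_add hs0, ← rpow_add hs0]
    congr 1; ring
  rw [hscal]
  push_cast
  ring
end
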